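/- arXiv:1312.7154 — 13 statements merged into one kernel-verified Lean document; each statement's English description precedes it below -/
import Mathlib

section
/- Let I be an interval of ℝ with nonempty interior, let G be a G_δ-subset of ℝ, and let (f_n)_{n≥0} be a sequence of continuous, nowhere locally constant real-valued functions on I. Then the intersection ⋂_{n≥0} f_n⁻¹(G) is a G_δ-subset of I (with its subspace topology). -/
/-- A `G_δ`-subset of a topological space: a countable intersection of dense
open subsets. -/
def IsGdeltaDense {X : Type*} [TopologicalSpace X] (s : Set X) : Prop :=
  ∃ T : Set (Set X), T.Countable ∧ (∀ t ∈ T, IsOpen t ∧ Dense t) ∧ s = ⋂₀ T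

/-- `f` is nowhere locally constant on `I`: on every nonempty open interval
contained in `I`, the restriction of `f` is not constant. -/
def NowhereLocallyConstantOn (f : ℝ → ℝ) (I : Set ℝ) : Prop :=
  ∀ a b : ℝ, a < b → Set.Ioo a b ⊆ I →
    ∃ x ∈ Set.Ioo a b, ∃ y ∈ Set.Ioo a b, f x ≠ f y

lemma exists_Ioo_subset (I : Set ℝ) (hI : I.OrdConnected)
    (hint : (interior I).Nonempty)
    (V : Set ℝ) (hV : IsOpen V) (x : ℝ) (hxI : x ∈ I) (hxV : x ∈ V) :
    ∃ a b : ℝ, a < b ∧ Set.Ioo a b ⊆ I ∩ V := by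
  obtain ⟨p, hp⟩ := hint
  obtain ⟨ε, hε, hball⟩ := Metric.isOpen_iff.mp hV x hxV
  rw [Real.ball_eq_Ioo] at hball
  rcases lt_trichotomy x p with hxp | hxp | hxp
  · refine ⟨x, min p (x + ε), lt_min hxp (by linarith), fun y hy => ?_⟩
    have h1 : y < p := lt_of_lt_of_le hy.2 (min_le_left _ _)
    have h2 : y < x + ε := lt_of_lt_of_le hy.2 (min_le_right _ _)
    exact ⟨hI.out hxI (interior_subset hp) ⟨hy.1.le, h1.le⟩,
      hball ⟨by linarith [hy.1], h2⟩⟩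
  · subst hxp
    obtain ⟨δ, hδ, hball2⟩ := Metric.isOpen_iff.mp isOpen_interior x hp
    rw [Real.ball_eq_Ioo] at hball2
    have hη : (0:ℝ) < min ε δ := lt_min hε hδ
    refine ⟨x - min ε δ, x + min ε δ, by linarith, fun y hy => ?_⟩
    have h1 := min_le_left ε δ
    have h2 := min_le_right ε δ
    obtain ⟨hy1, hy2⟩ := hy
    exact ⟨interior_subset (hball2 ⟨by linarith, by linarith⟩),
      hball ⟨by linarith, by linarith⟩⟩
  · refine ⟨max p (x - ε), x, max_lt hxp (by linarith), fun y hy => ?_⟩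
    have h1 : p < y := lt_of_le_of_lt (le_max_left _ _) hy.1
    have h2 : x - ε < y := lt_of_le_of_lt (le_max_right _ _) hy.1
    exact ⟨hI.out (interior_subset hp) hxI ⟨h1.le, hy.2.le⟩,
      hball ⟨h2, by linarith [hy.2]⟩⟩

lemma dense_preimage_aux (I : Set ℝ) (hI : I.OrdConnected)
    (hint : (interior I).Nonempty)
    (g : ℝ → ℝ) (hc : ContinuousOn g I) (hn : NowhereLocallyConstantOn g I)
    (t : Set ℝ) (htd : Dense t) :
    Dense {x : I | g x ∈ t} := by
  rw [dense_iff_inter_open]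
  rintro U hU ⟨x, hxU⟩
  obtain ⟨V, hV, rfl⟩ := isOpen_induced_iff.mp hU
  obtain ⟨a, b, hab, hsub⟩ := exists_Ioo_subset I hI hint V hV x x.2 hxU
  obtain ⟨x₁, hx₁, x₂, hx₂, hne⟩ := hn a b hab (fun y hy => (hsub hy).1)
  obtain ⟨v, hv⟩ := htd.inter_open_nonempty _ isOpen_Ioo
    (Set.nonempty_Ioo.mpr (min_lt_max.mpr hne))
  have huIcc : Set.uIcc x₁ x₂ ⊆ Set.Ioo a b :=
    Set.OrdConnected.uIcc_subset Set.ordConnected_Ioo hx₁ hx₂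
  have hcc : ContinuousOn g (Set.uIcc x₁ x₂) :=
    hc.mono (fun y hy => (hsub (huIcc hy)).1)
  have hvmem : v ∈ Set.uIcc (g x₁) (g x₂) := by
    rw [Set.uIcc]
    exact Set.Ioo_subset_Icc_self hv.1
  obtain ⟨z, hz, hzv⟩ := intermediate_value_uIcc hcc hvmem
  have hzab : z ∈ Set.Ioo a b := huIcc hz
  exact ⟨⟨z, (hsub hzab).1⟩, (hsub hzab).2, by simpa [hzv] using hv.2⟩

/-- Alniaçik–Saias: if `I` is an interval with nonempty interior, `G` a
`G_δ`-subset of `ℝ`, and `(f n)` a sequence of continuous nowhere locally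
constant maps on `I`, then `⋂ n, f n ⁻¹' G` is a `G_δ`-subset of `I`. -/
theorem alniacik_saias (I : Set ℝ) (hI : I.OrdConnected)
    (hint : (interior I).Nonempty)
    (G : Set ℝ) (hG : IsGdeltaDense G)
    (f : ℕ → ℝ → ℝ) (hcont : ∀ n, ContinuousOn (f n) I)
    (hnlc : ∀ n, NowhereLocallyConstantOn (f n) I) :
    IsGdeltaDense {x : I | ∀ n, f n x ∈ G} := by
  obtain ⟨T, hTc, hTod, rfl⟩ := hG
  refine ⟨(fun p : ℕ × Set ℝ => {x : I | f p.1 x ∈ p.2}) '' (Set.univ ×ˢ T),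
    (Set.countable_univ.prod hTc).image _, ?_, ?_⟩
  · rintro s ⟨⟨n, t⟩, ⟨-, htT⟩, rfl⟩
    refine ⟨?_, dense_preimage_aux I hI hint (f n) (hcont n) (hnlc n) t (hTod t htT).2⟩
    exact (hTod t htT).1.preimage ((hcont n).restrict)
  · ext x
    simp only [Set.mem_setOf_eq, Set.sInter_image, Set.mem_iInter, Set.mem_prod,
      Set.mem_univ, true_and, Set.mem_sInter, Prod.forall]
end

section
/- Let X be a nonempty complete metric space that is locally connected, let J be an interval in ℝ, and let N be a finite or countable index set. For each n ∈ N let G_n be a G_δ-subset of J and let f_n : X → J be a continuous function that is nowhere locally constant. Then ⋂_{n∈N} f_n⁻¹(G_n) is a G_δ-subset of X. -/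
/-- A function on a topological space is nowhere locally constant if its
restriction to every nonempty connected open subset is not constant. -/
def NowhereLocallyConstant {X : Type*} [TopologicalSpace X] (f : X → ℝ) : Prop :=
  ∀ U : Set X, IsOpen U → IsConnected U → ∃ x ∈ U, ∃ y ∈ U, f x ≠ f y

lemma dense_preimage_aux_s2 {X : Type*} [TopologicalSpace X] [LocallyConnectedSpace X]
    (J : Set ℝ) (hJ : J.OrdConnected) (f : X → ℝ) (hfJ : ∀ x, f x ∈ J)
    (hcont : Continuous f) (hnlc : NowhereLocallyConstant f)
    (D : Set J) (hDd : Dense D) :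
    Dense ((fun x => (⟨f x, hfJ x⟩ : J)) ⁻¹' D) := by
  rw [dense_iff_inter_open]
  rintro U hU ⟨x, hx⟩
  set V := connectedComponentIn U x with hV
  have hVo : IsOpen V := hU.connectedComponentIn
  have hVU : V ⊆ U := connectedComponentIn_subset U x
  have hVc : IsConnected V := isConnected_connectedComponentIn_iff.mpr hx
  obtain ⟨a, ha, b, hb, hab⟩ := hnlc V hVo hVc
  set lo := min (f a) (f b) with hlo
  set hi := max (f a) (f b) with hhi
  have hlt : lo < hi := min_lt_max.mpr hab
  have hloJ : lo ∈ J := by rcases min_cases (f a) (f b) with ⟨h, _⟩ | ⟨h, _⟩ <;>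
    simp [hlo, h, hfJ]
  have hhiJ : hi ∈ J := by rcases max_cases (f a) (f b) with ⟨h, _⟩ | ⟨h, _⟩ <;>
    simp [hhi, h, hfJ]
  have hIcc : Set.Icc lo hi ⊆ f '' V := by
    have hOC : (f '' V).OrdConnected :=
      (hVc.isPreconnected.image f hcont.continuousOn).ordConnected
    have hloI : lo ∈ f '' V := by
      rcases min_cases (f a) (f b) with ⟨h, _⟩ | ⟨h, _⟩
      · exact ⟨a, ha, h.symm⟩
      · exact ⟨b, hb, h.symm⟩
    have hhiI : hi ∈ f '' V := by
      rcases max_cases (f a) (f b) with ⟨h, _⟩ | ⟨h, _⟩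
      · exact ⟨a, ha, h.symm⟩
      · exact ⟨b, hb, h.symm⟩
    exact hOC.out hloI hhiI
  set W : Set J := Subtype.val ⁻¹' Set.Ioo lo hi with hW
  have hWo : IsOpen W := isOpen_Ioo.preimage continuous_subtype_val
  have hWne : W.Nonempty := by
    have hm : (lo + hi) / 2 ∈ Set.Ioo lo hi := ⟨by linarith, by linarith⟩
    exact ⟨⟨(lo + hi) / 2, hJ.out hloJ hhiJ ⟨hm.1.le, hm.2.le⟩⟩, hm⟩
  obtain ⟨d, hdW, hdD⟩ := hDd.inter_open_nonempty W hWo hWne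
  obtain ⟨v, hv, hfv⟩ := hIcc (Set.Ioo_subset_Icc_self hdW)
  refine ⟨v, hVU hv, ?_⟩
  have : (⟨f v, hfJ v⟩ : J) = d := Subtype.ext hfv
  simpa [this] using hdD

/-- Let `X` be a nonempty complete, locally connected metric space, `J` an
interval of `ℝ`, `N` an at most countable index set; for `n ∈ N` let `G n` be
a `G_δ`-subset of `J` and `f n : X → J` continuous and nowhere locally
constant. Then `⋂ n, f n ⁻¹' (G n)` is a `G_δ`-subset of `X`. -/
theorem gdelta_preimage_inter {X : Type*} [MetricSpace X] [CompleteSpace X]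
    [Nonempty X] [LocallyConnectedSpace X]
    (J : Set ℝ) (hJ : J.OrdConnected)
    (N : Type*) [Countable N]
    (G : N → Set ℝ) (hGJ : ∀ n, G n ⊆ J)
    (hG : ∀ n, IsGdeltaDense ((Subtype.val ⁻¹' G n) : Set J))
    (f : N → X → ℝ) (hfJ : ∀ n x, f n x ∈ J)
    (hcont : ∀ n, Continuous (f n))
    (hnlc : ∀ n, NowhereLocallyConstant (f n)) :
    IsGdeltaDense (⋂ n, f n ⁻¹' G n) := by
  classical
  choose T hTc hTprop hTeq using hG
  set g : N → X → J := fun n x => ⟨f n x, hfJ n x⟩ with hg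
  have hcg : ∀ n, Continuous (g n) := fun n => (hcont n).subtype_mk _
  refine ⟨⋃ n, (fun t => g n ⁻¹' t) '' T n, ?_, ?_, ?_⟩
  · exact Set.countable_iUnion fun n => (hTc n).image _
  · rintro s hs
    simp only [Set.mem_iUnion, Set.mem_image] at hs
    obtain ⟨n, t, ht, rfl⟩ := hs
    obtain ⟨hto, htd⟩ := hTprop n t ht
    exact ⟨hto.preimage (hcg n),
      dense_preimage_aux_s2 J hJ (f n) (hfJ n) (hcont n) (hnlc n) t htd⟩
  · ext x
    simp only [Set.mem_iInter, Set.mem_sInter, Set.mem_iUnion, Set.mem_image,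
      Set.mem_preimage]
    have key : ∀ n, f n x ∈ G n ↔ ∀ t ∈ T n, g n x ∈ t := by
      intro n
      have : g n x ∈ (Subtype.val ⁻¹' G n : Set J) ↔ ∀ t ∈ T n, g n x ∈ t := by
        rw [hTeq n, Set.mem_sInter]
      simpa using this
    constructor
    · rintro h s ⟨n, t, ht, rfl⟩
      exact (key n).mp (h n) t ht
    · intro h n
      exact (key n).mpr (fun t ht => h _ ⟨n, t, ht, rfl⟩)
end

section
/- Let I_1, …, I_n be nonempty open subsets of ℝ and, for each i = 1, …, n, let G_i be a G_δ-subset of I_i. Then there exists a tuple (ξ_1, …, ξ_n) ∈ G_1 × ⋯ × G_n such that the real numbers ξ_1, …, ξ_n are algebraically independent over ℚ. -/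
open Set

private instance mvPolyCountable (n : ℕ) : Countable (MvPolynomial (Fin n) ℚ) :=
  Function.Injective.countable (f := fun p : MvPolynomial (Fin n) ℚ =>
    (AddMonoidAlgebra.coeff p : (Fin n →₀ ℕ) →₀ ℚ)) AddMonoidAlgebra.coeff_injective

private lemma aux_analytic (n : ℕ) (p : MvPolynomial (Fin n) ℚ) :
    AnalyticOnNhd ℝ (fun y : Fin n → ℝ => MvPolynomial.aeval y p) Set.univ := by
  induction p using MvPolynomial.induction_on with
  | C a => simpa using (analyticOnNhd_const : AnalyticOnNhd ℝ
      (fun _ : Fin n → ℝ => algebraMap ℚ ℝ a) Set.univ)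
  | add p q hp hq => simpa [Pi.add_def] using hp.add hq
  | mul_X p i hp =>
      have hproj : AnalyticOnNhd ℝ (fun y : Fin n → ℝ => y i) Set.univ :=
        (ContinuousLinearMap.proj i : (Fin n → ℝ) →L[ℝ] ℝ).analyticOnNhd _
      simpa using hp.mul hproj

private lemma aux_cont (n : ℕ) (p : MvPolynomial (Fin n) ℚ) :
    Continuous (fun y : Fin n → ℝ => MvPolynomial.aeval y p) := by
  rw [← continuousOn_univ]
  exact (aux_analytic n p).continuousOn

private lemma aux_zero (n : ℕ) (p : MvPolynomial (Fin n) ℚ) {U : Set (Fin n → ℝ)}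
    (hU : IsOpen U) (hne : U.Nonempty)
    (h : ∀ y ∈ U, MvPolynomial.aeval y p = 0) : p = 0 := by
  obtain ⟨y₀, hy₀⟩ := hne
  have hz : ∀ y : Fin n → ℝ, MvPolynomial.aeval y p = 0 := by
    have hev : (fun y : Fin n → ℝ => MvPolynomial.aeval y p) =ᶠ[nhds y₀] 0 :=
      Filter.eventuallyEq_of_mem (hU.mem_nhds hy₀) h
    have := (aux_analytic n p).eqOn_zero_of_preconnected_of_eventuallyEq_zero
      isPreconnected_univ (Set.mem_univ y₀) hev
    intro y
    exact this (Set.mem_univ y)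
  have hinj := MvPolynomial.map_injective (σ := Fin n) (algebraMap ℚ ℝ)
    (algebraMap ℚ ℝ).injective
  apply hinj
  rw [map_zero]
  apply MvPolynomial.funext
  intro x
  rw [map_zero, MvPolynomial.eval_map, ← MvPolynomial.aeval_def]
  exact hz x

/-- Let `I 1, …, I n` be nonempty open subsets of `ℝ` and, for each `i`, let
`G i ⊆ I i` be a `G_δ`-subset of `I i` (with its subspace topology). Then
there is a tuple `(ξ 1, …, ξ n) ∈ G 1 × ⋯ × G n` of real numbers that are
algebraically independent over `ℚ`. -/
theorem exists_algebraically_independent_in_gdeltas (n : ℕ)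
    (I : Fin n → Set ℝ) (hIo : ∀ i, IsOpen (I i)) (hIne : ∀ i, (I i).Nonempty)
    (G : Fin n → Set ℝ) (hGI : ∀ i, G i ⊆ I i)
    (hG : ∀ i, IsGdeltaDense ((Subtype.val ⁻¹' G i) : Set (I i))) :
    ∃ ξ : Fin n → ℝ, (∀ i, ξ i ∈ G i) ∧ AlgebraicIndependent ℚ ξ := by
  classical
  choose T hTc hTod hTeq using hG
  haveI : ∀ i, LocallyCompactSpace (I i) := fun i => (hIo i).locallyCompactSpace
  haveI : ∀ i, Nonempty (I i) := fun i => (hIne i).to_subtype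
  -- index type for the countable family of dense open sets
  let J := (Σ i : Fin n, {t : Set (I i) // t ∈ T i}) ⊕ {p : MvPolynomial (Fin n) ℚ // p ≠ 0}
  haveI : ∀ i, Countable {t : Set (I i) // t ∈ T i} := fun i => (hTc i).to_subtype
  haveI : Countable J := inferInstanceAs (Countable (_ ⊕ _))
  let F : J → Set (∀ i, (I i : Set ℝ)) := fun j =>
    match j with
    | .inl ⟨i, t, _⟩ => (fun x => x i) ⁻¹' t
    | .inr ⟨p, _⟩ => {x | MvPolynomial.aeval (fun i => (x i : ℝ)) p ≠ 0}
  have hFo : ∀ j, IsOpen (F j) := by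
    rintro (⟨i, t, ht⟩ | ⟨p, hp⟩)
    · exact (hTod i t ht).1.preimage (continuous_apply i)
    · have hc : Continuous fun x : ∀ i, (I i : Set ℝ) =>
          MvPolynomial.aeval (fun i => (x i : ℝ)) p :=
        (aux_cont n p).comp (continuous_pi fun i => continuous_subtype_val.comp
          (continuous_apply i))
      exact isOpen_compl_singleton.preimage hc
  have hFd : ∀ j, Dense (F j) := by
    rintro (⟨i, t, ht⟩ | ⟨p, hp⟩)
    · -- density of a coordinate preimage of a dense set
      have hd : Dense (Set.pi Set.univ
          (Function.update (fun j => (Set.univ : Set (I j))) i t)) := by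
        apply dense_pi
        intro j _
        rcases eq_or_ne j i with rfl | hne
        · simpa using (hTod j t ht).2
        · simp [Function.update_of_ne hne]
      refine hd.mono ?_
      intro x hx
      have := hx i (Set.mem_univ i)
      simpa [F] using this
    · -- density of the nonvanishing set of a nonzero polynomial
      rw [dense_iff_inter_open]
      intro V hVo hVne
      by_contra hempty
      rw [Set.not_nonempty_iff_eq_empty] at hempty
      have hvanish : ∀ x ∈ V, MvPolynomial.aeval (fun i => ((x i : ℝ))) p = 0 := by
        intro x hx
        by_contra hne
        exact absurd hempty (Set.nonempty_iff_ne_empty.mp ⟨x, hx, hne⟩)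
      obtain ⟨x₀, hx₀⟩ := hVne
      obtain ⟨u, hu, huV⟩ := (isOpen_pi_iff'.mp hVo) x₀ hx₀
      -- each u i is induced from an open set v i in ℝ
      have hv : ∀ i, ∃ v : Set ℝ, IsOpen v ∧ Subtype.val ⁻¹' v = u i := fun i =>
        isOpen_induced_iff.mp (hu i).1
      choose v hvo hvu using hv
      set W : Set (Fin n → ℝ) := Set.pi Set.univ (fun i => I i ∩ v i) with hW
      have hWo : IsOpen W := isOpen_set_pi Set.finite_univ
        (fun i _ => (hIo i).inter (hvo i))
      have hWne : W.Nonempty := by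
        refine ⟨fun i => (x₀ i : ℝ), fun i _ => ⟨(x₀ i).2, ?_⟩⟩
        have := (hu i).2
        rw [← hvu i] at this
        exact this
      have hzero : ∀ y ∈ W, MvPolynomial.aeval y p = 0 := by
        intro y hy
        set x : ∀ i, (I i : Set ℝ) := fun i => ⟨y i, (hy i (Set.mem_univ i)).1⟩ with hx
        have hxV : x ∈ V := by
          apply huV
          intro i _
          rw [← hvu i]
          exact (hy i (Set.mem_univ i)).2
        have := hvanish x hxV
        simpa using this
      exact hp (aux_zero n p hWo hWne hzero)
  have hdense : Dense (⋂ j, F j) := dense_iInter_of_isOpen hFo hFd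
  obtain ⟨x, hx⟩ := hdense.nonempty
  simp only [Set.mem_iInter] at hx
  refine ⟨fun i => (x i : ℝ), ?_, ?_⟩
  · intro i
    have hmem : x i ∈ ⋂₀ T i := by
      intro t ht
      exact hx (.inl ⟨i, t, ht⟩)
    rw [← hTeq i] at hmem
    exact hmem
  · rw [algebraicIndependent_iff]
    intro p hp
    by_contra hpne
    exact hx (.inr ⟨p, hpne⟩) hp
end

section
/- Let I be an interval of ℝ with nonempty interior and let (f_n)_{n≥1} be a sequence of continuous, nowhere locally constant real-valued functions on I. Then there exists an uncountable subset E of I ∩ 𝕃 such that for every ξ ∈ E and every n ≥ 1 the number f_n(ξ) is a Liouville number. -/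
/-- Let `I` be an interval of `ℝ` with nonempty interior and `(f n)` a sequence
of continuous, nowhere locally constant real maps on `I`. Then there is an
uncountable subset `E` of `I ∩ 𝕃` such that `f n ξ` is a Liouville number for
all `n` and all `ξ ∈ E`. -/
theorem uncountable_liouville_common_preimage (I : Set ℝ) (hI : I.OrdConnected)
    (hint : (interior I).Nonempty)
    (f : ℕ → ℝ → ℝ) (hcont : ∀ n, ContinuousOn (f n) I)
    (hnlc : ∀ n, NowhereLocallyConstantOn (f n) I) :
    ∃ E : Set ℝ, E ⊆ I ∧ (∀ ξ ∈ E, Liouville ξ) ∧ ¬ E.Countable ∧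
      ∀ ξ ∈ E, ∀ n, Liouville (f n ξ) := by
  classical
  obtain ⟨x₀, hx₀⟩ := hint
  obtain ⟨a, b, hab, hJI⟩ :=
    mem_nhds_iff_exists_Ioo_subset.mp (isOpen_interior.mem_nhds hx₀)
  set L : Set ℝ := {x | Liouville x} with hL
  set J : Set ℝ := Set.Ioo a b with hJ
  have hJopen : IsOpen J := isOpen_Ioo
  have hJne : J.Nonempty := ⟨x₀, hab⟩
  have hJsubI : J ⊆ I := hJI.trans interior_subset
  -- the Gδ and J-density properties of the preimage sets
  have keyGδ : ∀ n, IsGδ (J ∩ f n ⁻¹' L) := by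
    intro n
    obtain ⟨T, hTopen, hTc, hTeq⟩ := (IsGδ.setOf_liouville : IsGδ {x : ℝ | Liouville x})
    have : J ∩ f n ⁻¹' L = J ∩ ⋂ t : T, (J ∩ f n ⁻¹' (t : Set ℝ)) := by
      ext x
      simp only [Set.mem_inter_iff, Set.mem_iInter, Set.mem_preimage, hL, hTeq,
        Set.mem_sInter, Subtype.forall]
      constructor
      · rintro ⟨hxJ, hxL⟩; exact ⟨hxJ, fun t ht => ⟨hxJ, hxL t ht⟩⟩
      · rintro ⟨hxJ, h⟩; exact ⟨hxJ, fun t ht => (h t ht).2⟩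
    rw [this]
    have : Countable ↥T := hTc.to_subtype
    refine hJopen.isGδ.inter (IsGδ.iInter fun t => ?_)
    exact (((hcont n).mono hJsubI).isOpen_inter_preimage hJopen (hTopen t t.2)).isGδ
  have keyDense : ∀ n, ∀ c d : ℝ, c < d → Set.Ioo c d ⊆ J →
      (Set.Ioo c d ∩ (J ∩ f n ⁻¹' L)).Nonempty := by
    intro n c d hcd hsub
    obtain ⟨x, hx, y, hy, hxy⟩ := hnlc n c d hcd (hsub.trans hJsubI)
    have huIcc : Set.uIcc x y ⊆ Set.Ioo c d := Set.ordConnected_Ioo.uIcc_subset hx hy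
    have hiv := intermediate_value_uIcc
      ((hcont n).mono ((huIcc.trans hsub).trans hJsubI))
    have hℓ : ∃ ℓ ∈ L, ℓ ∈ Set.uIcc (f n x) (f n y) := by
      rcases hxy.lt_or_gt with h | h
      · obtain ⟨ℓ, hℓL, hℓI⟩ := dense_liouville.exists_between h
        exact ⟨ℓ, hℓL, Set.Icc_subset_uIcc (Set.Ioo_subset_Icc_self hℓI)⟩
      · obtain ⟨ℓ, hℓL, hℓI⟩ := dense_liouville.exists_between h
        exact ⟨ℓ, hℓL, Set.Icc_subset_uIcc' (Set.Ioo_subset_Icc_self hℓI)⟩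
    obtain ⟨ℓ, hℓL, hℓm⟩ := hℓ
    obtain ⟨w, hw, hfw⟩ := hiv hℓm
    have hwcd : w ∈ Set.Ioo c d := huIcc hw
    exact ⟨w, hwcd, hsub hwcd, by simp only [Set.mem_preimage]; rw [hfw]; exact hℓL⟩
  -- the residual sets D n
  set D : ℕ → Set ℝ := fun n => (J ∩ f n ⁻¹' L) ∪ (closure J)ᶜ with hD
  have hDres : ∀ n, D n ∈ residual ℝ := by
    intro n
    refine mem_residual.mpr ⟨D n, subset_rfl,
      (keyGδ n).union isClosed_closure.isOpen_compl.isGδ, ?_⟩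
    rw [dense_iff_inter_open]
    intro U hU hUne
    by_cases hmeet : (U ∩ closure J).Nonempty
    · obtain ⟨y, hyU, hyc⟩ := hmeet
      obtain ⟨z, hzU, hzJ⟩ := mem_closure_iff.mp hyc U hU hyU
      obtain ⟨c, d, hzcd, hcdsub⟩ :=
        mem_nhds_iff_exists_Ioo_subset.mp ((hU.inter hJopen).mem_nhds ⟨hzU, hzJ⟩)
      obtain ⟨w, hw1, hw2⟩ := keyDense n c d (hzcd.1.trans hzcd.2)
        (hcdsub.trans Set.inter_subset_right)
      exact ⟨w, (hcdsub hw1).1, Or.inl hw2⟩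
    · obtain ⟨u, hu⟩ := hUne
      refine ⟨u, hu, Or.inr fun hcl => hmeet ⟨u, hu, hcl⟩⟩
  -- the residual set R
  set R : Set ℝ := L ∩ ⋂ n, D n with hR
  have hRres : R ∈ residual ℝ := by
    refine Filter.inter_mem ?_ (countable_iInter_mem.mpr hDres)
    exact eventually_residual_liouville
  refine ⟨J ∩ R, fun ξ hξ => hJsubI hξ.1, fun ξ hξ => hξ.2.1, ?_, ?_⟩
  · -- uncountability
    intro hcnt
    set S : Set ℝ := R ∩ ⋂ x ∈ J ∩ R, {x}ᶜ with hS
    have hSres : S ∈ residual ℝ := by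
      refine Filter.inter_mem hRres ((countable_bInter_mem hcnt).mpr fun x _ => ?_)
      exact mem_residual.mpr ⟨{x}ᶜ, subset_rfl, isOpen_compl_singleton.isGδ,
        dense_compl_singleton x⟩
    obtain ⟨w, hwS, hwJ⟩ := (dense_of_mem_residual hSres).exists_mem_open hJopen hJne
    have hwE : w ∈ J ∩ R := ⟨hwJ, hwS.1⟩
    have := Set.mem_iInter₂.mp hwS.2 w hwE
    exact this rfl
  · -- Liouville values
    intro ξ hξ n
    have hξD : ξ ∈ D n := Set.mem_iInter.mp hξ.2.2 n
    rcases hξD with h | h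
    · exact h.2
    · exact absurd (subset_closure hξ.1) h
end

section
/- Let I be an interval of ℝ with nonempty interior and let φ : I → ℝ be a continuous, nowhere locally constant function. Then the set of Liouville numbers ξ ∈ I such that φ(ξ) is also a Liouville number is uncountable. -/
open Set Filter

/-- An open subinterval of `Icc a b` is contained in `Ioo a b`. -/
lemma Ioo_subset_Ioo_of_subset_Icc {a b c d : ℝ} (hcd : c < d)
    (h : Set.Ioo c d ⊆ Set.Icc a b) : Set.Ioo c d ⊆ Set.Ioo a b := by
  intro x hx
  have hx1 : c < x := hx.1
  have hx2 : x < d := hx.2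
  have h1 : a < x := by
    have hm : (c + x) / 2 ∈ Set.Ioo c d := ⟨by linarith, by linarith⟩
    have := (h hm).1
    have : a ≤ (c + x) / 2 := this
    linarith
  have h2 : x < b := by
    have hm : (x + d) / 2 ∈ Set.Ioo c d := ⟨by linarith, by linarith⟩
    have := (h hm).2
    have : (x + d) / 2 ≤ b := this
    linarith
  exact ⟨h1, h2⟩

/-- A countable subset of `ℝ` is in the complement-residual sense meagre:
its complement is residual. -/
lemma compl_mem_residual_of_countable {S : Set ℝ} (hS : S.Countable) :
    Sᶜ ∈ residual ℝ := by
  have : Sᶜ = ⋂ x ∈ S, ({x}ᶜ : Set ℝ) := by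
    ext y
    simp only [Set.mem_compl_iff, Set.mem_iInter, Set.mem_singleton_iff]
    exact ⟨fun h i hi hyi => h (hyi ▸ hi), fun h hy => h y hy rfl⟩
  rw [this]
  refine (countable_bInter_mem hS).2 fun x _ => ?_
  exact residual_of_dense_open isClosed_singleton.isOpen_compl (dense_compl_singleton x)

/-- Let `I` be an interval of `ℝ` with nonempty interior and `φ : I → ℝ`
continuous and nowhere locally constant. Then the set of Liouville numbers
`ξ ∈ I` such that `φ ξ` is a Liouville number is uncountable. -/
theorem uncountable_liouville_with_liouville_image (I : Set ℝ)
    (hI : I.OrdConnected) (hint : (interior I).Nonempty)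
    (φ : ℝ → ℝ) (hcont : ContinuousOn φ I)
    (hnlc : NowhereLocallyConstantOn φ I) :
    ¬ {ξ : ℝ | ξ ∈ I ∧ Liouville ξ ∧ Liouville (φ ξ)}.Countable := by
  intro hcount
  obtain ⟨a, b, hab, hIoo⟩ := isOpen_interior.exists_Ioo_subset hint
  have hIooI : Set.Ioo a b ⊆ I := hIoo.trans interior_subset
  -- Write the Liouville numbers as a countable intersection of open sets.
  obtain ⟨T, hTopen, hTcount, hTeq⟩ := (IsGδ.setOf_liouville : IsGδ {x : ℝ | Liouville x})
  have hLsub : ∀ V ∈ T, {x : ℝ | Liouville x} ⊆ V := by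
    intro V hV
    rw [hTeq]
    exact sInter_subset_of_mem hV
  have hVdense : ∀ V ∈ T, Dense V := fun V hV => dense_liouville.mono (hLsub V hV)
  -- The key residual set.
  set C : Set ℝ := (Set.Icc a b)ᶜ with hC
  have hQmem : (⋂ V ∈ T, ((Set.Ioo a b ∩ φ ⁻¹' V) ∪ C)) ∈ residual ℝ := by
    refine (countable_bInter_mem hTcount).2 fun V hV => ?_
    refine residual_of_dense_open ?_ ?_
    · exact ((hcont.mono hIooI).isOpen_inter_preimage isOpen_Ioo (hTopen V hV)).union
        isClosed_Icc.isOpen_compl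
    · rw [dense_iff_inter_open]
      intro U hU hUne
      obtain ⟨c, d, hcd, hcdU⟩ := hU.exists_Ioo_subset hUne
      by_cases hsub : Set.Ioo c d ⊆ Set.Icc a b
      · -- the interval sits inside (a,b); use nowhere-local-constancy + IVT
        have hcdab : Set.Ioo c d ⊆ Set.Ioo a b := Ioo_subset_Ioo_of_subset_Icc hcd hsub
        have hcdI : Set.Ioo c d ⊆ I := hcdab.trans hIooI
        obtain ⟨x, hx, y, hy, hxy⟩ := hnlc c d hcd hcdI
        -- WLOG φ x < φ y
        obtain ⟨u, hu, v, hv, huv⟩ : ∃ u ∈ Set.Ioo c d, ∃ v ∈ Set.Ioo c d, φ u < φ v := by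
          rcases hxy.lt_or_gt with h | h
          · exact ⟨x, hx, y, hy, h⟩
          · exact ⟨y, hy, x, hx, h⟩
        obtain ⟨w, hwV, hw1, hw2⟩ : ∃ w, w ∈ V ∧ φ u < w ∧ w < φ v := by
          have := (dense_iff_inter_open.1 (hVdense V hV)) (Set.Ioo (φ u) (φ v))
            isOpen_Ioo (Set.nonempty_Ioo.2 huv)
          obtain ⟨w, hw⟩ := this
          exact ⟨w, hw.2, hw.1.1, hw.1.2⟩
        have huIcc : Set.uIcc u v ⊆ Set.Ioo c d := by
          apply Set.OrdConnected.uIcc_subset Set.ordConnected_Ioo hu hv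
        have hφcont : ContinuousOn φ (Set.uIcc u v) :=
          hcont.mono (huIcc.trans hcdI)
        have hw_mem : w ∈ Set.uIcc (φ u) (φ v) := by
          rw [Set.uIcc_of_le huv.le]
          exact ⟨hw1.le, hw2.le⟩
        obtain ⟨z, hz, hφz⟩ := intermediate_value_uIcc hφcont hw_mem
        have hzcd : z ∈ Set.Ioo c d := huIcc hz
        exact ⟨z, hcdU hzcd, Or.inl ⟨hcdab hzcd, by rw [Set.mem_preimage, hφz]; exact hwV⟩⟩
      · -- the interval escapes [a,b]; pick a point outside [a,b]
        obtain ⟨p, hp, hpC⟩ := Set.not_subset.1 hsub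
        exact ⟨p, hcdU hp, Or.inr hpC⟩
  have hLmem : {x : ℝ | Liouville x} ∈ residual ℝ := eventually_residual_liouville
  have hSc : ({ξ : ℝ | ξ ∈ I ∧ Liouville ξ ∧ Liouville (φ ξ)})ᶜ ∈ residual ℝ :=
    compl_mem_residual_of_countable hcount
  have hR : ({x : ℝ | Liouville x} ∩ (⋂ V ∈ T, ((Set.Ioo a b ∩ φ ⁻¹' V) ∪ C)) ∩
      ({ξ : ℝ | ξ ∈ I ∧ Liouville ξ ∧ Liouville (φ ξ)})ᶜ) ∈ residual ℝ :=
    Filter.inter_mem (Filter.inter_mem hLmem hQmem) hSc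
  have hdense := dense_of_mem_residual hR
  -- The residual set misses `Ioo a b`, contradicting its density.
  set m : ℝ := (a + b) / 2 with hm
  have hmab : m ∈ Set.Ioo a b := ⟨by simp only [hm]; linarith, by simp only [hm]; linarith⟩
  have hdisj : ∀ ξ ∈ ({x : ℝ | Liouville x} ∩ (⋂ V ∈ T, ((Set.Ioo a b ∩ φ ⁻¹' V) ∪ C)) ∩
      ({ξ : ℝ | ξ ∈ I ∧ Liouville ξ ∧ Liouville (φ ξ)})ᶜ), ξ ∉ Set.Ioo a b := by
    rintro ξ ⟨⟨hξL, hξQ⟩, hξS⟩ hξab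
    apply hξS
    refine ⟨hIooI hξab, hξL, ?_⟩
    have : φ ξ ∈ ⋂₀ T := by
      intro V hV
      have := Set.mem_iInter₂.1 hξQ V hV
      rcases this with h | h
      · exact h.2
      · exact absurd (Set.Ioo_subset_Icc_self hξab) h
    rw [← hTeq] at this
    exact this
  have hmem : m ∈ closure ({x : ℝ | Liouville x} ∩ (⋂ V ∈ T, ((Set.Ioo a b ∩ φ ⁻¹' V) ∪ C)) ∩
      ({ξ : ℝ | ξ ∈ I ∧ Liouville ξ ∧ Liouville (φ ξ)})ᶜ) := hdense m
  have hclosed : closure ({x : ℝ | Liouville x} ∩ (⋂ V ∈ T, ((Set.Ioo a b ∩ φ ⁻¹' V) ∪ C)) ∩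
      ({ξ : ℝ | ξ ∈ I ∧ Liouville ξ ∧ Liouville (φ ξ)})ᶜ) ⊆ (Set.Ioo a b)ᶜ := by
    apply closure_minimal
    · intro ξ hξ
      exact hdisj ξ hξ
    · exact isOpen_Ioo.isClosed_compl
  exact hclosed hmem hmab
end

section
/- For every real number t there exist uncountably many Liouville numbers ξ such that t − ξ is also a Liouville number; in particular, every real number is a sum of two Liouville numbers. -/
open Set Filter

/-- Erdős: for every real number `t`, there are uncountably many Liouville
numbers `ξ` such that `t - ξ` is also a Liouville number; in particular every
real number is a sum of two Liouville numbers. -/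
theorem erdos_sum_of_two_liouville (t : ℝ) :
    ¬ {ξ : ℝ | Liouville ξ ∧ Liouville (t - ξ)}.Countable ∧
      ∃ ξ η : ℝ, Liouville ξ ∧ Liouville η ∧ t = ξ + η := by
  set S : Set ℝ := {ξ : ℝ | Liouville ξ ∧ Liouville (t - ξ)} with hSdef
  have hL : {x : ℝ | Liouville x} ∈ residual ℝ := eventually_residual_liouville
  set e : ℝ ≃ₜ ℝ := (Homeomorph.neg ℝ).trans (Homeomorph.addLeft t) with he
  have hmap : (residual ℝ).map e = residual ℝ := e.residual_map_eq
  have hpre : e ⁻¹' {x : ℝ | Liouville x} ∈ residual ℝ := by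
    rw [← hmap] at hL
    exact hL
  have hpre' : {ξ : ℝ | Liouville (t - ξ)} ∈ residual ℝ := by
    have heq : {ξ : ℝ | Liouville (t - ξ)} = e ⁻¹' {x : ℝ | Liouville x} := by
      ext ξ
      simp [he, sub_eq_add_neg]
    rw [heq]
    exact hpre
  have hS : S ∈ residual ℝ := by
    have := Filter.inter_mem hL hpre'
    convert this using 1
    rfl
  constructor
  · intro hc
    have hcompl : Sᶜ ∈ residual ℝ := by
      have : (⋂ x ∈ S, ({x}ᶜ : Set ℝ)) ∈ residual ℝ :=
        (countable_bInter_mem hc).mpr fun x _ =>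
          residual_of_dense_open isOpen_compl_singleton (dense_compl_singleton x)
      rwa [← compl_iUnion₂, Set.biUnion_of_singleton] at this
    have hempty : (∅ : Set ℝ) ∈ residual ℝ := by
      have := Filter.inter_mem hS hcompl
      rwa [Set.inter_compl_self] at this
    exact absurd (dense_of_mem_residual hempty).nonempty (by simp)
  · obtain ⟨ξ, hξ⟩ := (dense_of_mem_residual hS).nonempty
    exact ⟨ξ, t - ξ, hξ.1, hξ.2, by ring⟩
end

section
/- Let F ∈ ℚ[X,Y] be a nonconstant polynomial with rational coefficients and let t be a real number. Assume that the set of pairs (ξ, η) of Liouville numbers with F(ξ, η) = t is uncountable. Then t is transcendental over ℚ if and only if there exist two Liouville numbers ξ and η that are algebraically independent over ℚ and satisfy F(ξ, η) = t. -/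
set_option synthInstance.maxHeartbeats 1000000
set_option maxHeartbeats 2000000
set_option linter.unusedVariables false


open MvPolynomial
open IntermediateField

instance : Countable (MvPolynomial (Fin 2) ℚ) := by
  unfold MvPolynomial
  exact Function.Injective.countable (f := AddMonoidAlgebra.coeff)
    (fun a b h => by cases a; cases b; cases h; rfl)

lemma not_ai_iff {a b : ℝ} :
    ¬ AlgebraicIndependent ℚ ![a, b] ↔
      ∃ Q : MvPolynomial (Fin 2) ℚ, Q ≠ 0 ∧ aeval ![a, b] Q = 0 := by
  rw [algebraicIndependent_iff]
  push_neg
  exact ⟨fun ⟨Q, h1, h2⟩ => ⟨Q, h2, h1⟩, fun ⟨Q, h1, h2⟩ => ⟨Q, h2, h1⟩⟩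

noncomputable def Phi {B : Type*} [CommRing B] [Algebra ℚ B] (b : B) :
    MvPolynomial (Fin 2) ℚ →ₐ[ℚ] Polynomial B :=
  (Polynomial.mapAlgHom (aeval (R := ℚ) ![b])).comp (finSuccEquiv ℚ 1).toAlgHom

lemma Phi_eq {B : Type*} [CommRing B] [Algebra ℚ B] (b : B) :
    Phi b = aeval ![Polynomial.X, Polynomial.C b] := by
  apply algHom_ext
  intro i
  fin_cases i
  · show Phi b (X 0) = _
    rw [Phi, AlgHom.comp_apply]
    rw [show ((finSuccEquiv ℚ 1).toAlgHom (X 0)) = Polynomial.X from finSuccEquiv_X_zero]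
    simp
  · show Phi b (X 1) = _
    rw [Phi, AlgHom.comp_apply]
    rw [show ((finSuccEquiv ℚ 1).toAlgHom (X 1)) = Polynomial.C (X 0) from
      finSuccEquiv_X_succ (j := 0)]
    simp

lemma Phi_injective {B : Type*} [CommRing B] [IsDomain B] [Algebra ℚ B] {b : B}
    (hb : Transcendental ℚ b) : Function.Injective (Phi b) := by
  have hai : AlgebraicIndependent ℚ ![b] :=
    algebraicIndependent_unique_type_iff.mpr (by simpa using hb)
  have hψ : Function.Injective (aeval (R := ℚ) ![b] : MvPolynomial (Fin 1) ℚ →ₐ[ℚ] B) := hai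
  have hmap : Function.Injective
      (Polynomial.mapAlgHom (aeval (R := ℚ) ![b]) :
        Polynomial (MvPolynomial (Fin 1) ℚ) →ₐ[ℚ] Polynomial B) := by
    intro p q h
    exact Polynomial.map_injective _ hψ (by simpa using h)
  exact hmap.comp (finSuccEquiv ℚ 1).injective

lemma countable_bad {b : ℝ} (hb : Transcendental ℚ b) :
    {a : ℝ | ¬ AlgebraicIndependent ℚ ![a, b]}.Countable := by
  have key : ∀ (a : ℝ) (Q : MvPolynomial (Fin 2) ℚ),
      Polynomial.eval a (Phi b Q) = aeval ![a, b] Q := by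
    intro a Q
    rw [Phi_eq]
    have : ((Polynomial.aeval (R := ℝ) a).restrictScalars ℚ).comp
        (aeval ![Polynomial.X, Polynomial.C b]) = aeval ![a, b] := by
      rw [comp_aeval]
      congr 1
      funext i
      fin_cases i <;> simp
    have h2 : Polynomial.aeval a (aeval ![Polynomial.X, Polynomial.C b] Q) = aeval ![a, b] Q := by
      have h3 := DFunLike.congr_fun this Q
      simpa using h3
    rw [← h2, Polynomial.aeval_def, Polynomial.eval, Algebra.algebraMap_self]
  apply Set.Countable.mono (s₂ := ⋃ Q : {Q : MvPolynomial (Fin 2) ℚ // Q ≠ 0},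
    {a : ℝ | (Phi b Q.1).IsRoot a})
  · intro a ha
    obtain ⟨Q, hQ0, hQ⟩ := not_ai_iff.mp ha
    exact Set.mem_iUnion.mpr ⟨⟨Q, hQ0⟩, by simp [Polynomial.IsRoot, key, hQ]⟩
  · apply Set.countable_iUnion
    intro Q
    apply Set.Finite.countable
    apply Polynomial.finite_setOf_isRoot
    intro h0
    exact Q.2 (Phi_injective hb (by rw [h0, map_zero]))

lemma ai_swap {a b : ℝ} (h : AlgebraicIndependent ℚ ![a, b]) :
    AlgebraicIndependent ℚ ![b, a] := by
  have := h.comp (Equiv.swap 0 1) (Equiv.injective _)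
  convert this using 1
  funext i
  fin_cases i <;> simp

lemma liouville_transcendental {x : ℝ} (h : Liouville x) : Transcendental ℚ x :=
  fun halg => h.transcendental ((IsFractionRing.isAlgebraic_iff ℤ ℚ ℝ).mpr halg)


lemma isAlgebraic_of_not_ai {a b : ℝ} (ha : Transcendental ℚ a)
    (h : ¬ AlgebraicIndependent ℚ ![a, b]) : IsAlgebraic ℚ⟮a⟯ b := by
  set gen := AdjoinSimple.gen ℚ a with hgendef
  have hgen : Transcendental ℚ gen := by
    intro halg
    have := halg.algHom (ℚ⟮a⟯).val
    simp only [IntermediateField.coe_val] at this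
    rw [AdjoinSimple.coe_gen] at this
    exact ha this
  obtain ⟨Q, hQ0, hQ⟩ := not_ai_iff.mp h
  set Q' := rename (Equiv.swap (0 : Fin 2) 1) Q with hQ'def
  have hQ'0 : Q' ≠ 0 := by
    intro h0
    apply hQ0
    have hri := rename_injective (R := ℚ) (⇑(Equiv.swap (0 : Fin 2) 1)) (Equiv.injective _)
    apply hri
    rw [← hQ'def, h0]
    exact (map_zero _).symm
  have hp0 : Phi gen Q' ≠ 0 := by
    intro h0
    exact hQ'0 (Phi_injective hgen (by rw [h0, map_zero]))
  refine ⟨Phi gen Q', hp0, ?_⟩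
  rw [Phi_eq]
  have hχ : ((Polynomial.aeval (R := ℚ⟮a⟯) b).restrictScalars ℚ).comp
      (aeval ![Polynomial.X, Polynomial.C gen]) = aeval ![b, a] := by
    rw [comp_aeval]
    congr 1
    funext i
    fin_cases i
    · simp
    · simp only [Fin.mk_one, Fin.isValue, Matrix.cons_val_one, Matrix.head_cons, Matrix.cons_val_zero,
        AlgHom.coe_restrictScalars', Polynomial.aeval_C]
      exact AdjoinSimple.algebraMap_gen ℚ a
  have h2 : Polynomial.aeval (R := ℚ⟮a⟯) b (aeval ![Polynomial.X, Polynomial.C gen] Q') =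
      aeval ![b, a] Q' := by
    have h3 := DFunLike.congr_fun hχ Q'
    simpa using h3
  rw [h2, hQ'def, aeval_rename]
  have : (![b, a] ∘ (Equiv.swap (0 : Fin 2) 1)) = ![a, b] := by
    funext i
    fin_cases i <;> simp
  rw [this, hQ]

lemma isAlgebraic_target {a b tv : ℝ} (hb : IsAlgebraic ℚ⟮a⟯ b)
    (F : MvPolynomial (Fin 2) ℚ) (htv : aeval ![a, b] F = tv) : IsAlgebraic ℚ⟮a⟯ tv := by
  set K := ℚ⟮a⟯
  have : Algebra.IsAlgebraic K K⟮b⟯ :=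
    IntermediateField.isAlgebraic_adjoin_simple (isAlgebraic_iff_isIntegral.mp hb)
  have hmem : tv ∈ K⟮b⟯ := by
    rw [← htv]
    have hrange : Set.range ![a, b] ⊆ (K⟮b⟯ : Set ℝ) := by
      rw [Set.range_subset_iff]
      intro i
      fin_cases i
      · show a ∈ K⟮b⟯
        have : a ∈ K := mem_adjoin_simple_self ℚ a
        exact (K⟮b⟯).algebraMap_mem ⟨a, this⟩
      · exact mem_adjoin_simple_self K b
    have h1 : aeval ![a, b] F ∈ Algebra.adjoin ℚ (Set.range ![a, b]) := by
      rw [Algebra.adjoin_range_eq_range_aeval]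
      exact ⟨F, rfl⟩
    have h2 : Algebra.adjoin ℚ (Set.range ![a, b]) ≤
        ((K⟮b⟯).restrictScalars ℚ).toSubalgebra := by
      apply Algebra.adjoin_le
      exact hrange
    exact h2 h1
  have h3 : IsAlgebraic K (⟨tv, hmem⟩ : K⟮b⟯) := Algebra.IsAlgebraic.isAlgebraic _
  have h4 := h3.algHom (K⟮b⟯).val
  simpa using h4

lemma not_ai_of_isAlgebraic {a b : ℝ} (ha : Transcendental ℚ a)
    (h : IsAlgebraic ℚ⟮a⟯ b) : ¬ AlgebraicIndependent ℚ ![a, b] := by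
  obtain ⟨p, hp0, hpb⟩ := h
  set n := p.natDegree with hn
  have hrep : ∀ i : ℕ, ∃ r s : Polynomial ℚ, Polynomial.aeval a s ≠ 0 ∧
      ((p.coeff i : ℝ)) * Polynomial.aeval a s = Polynomial.aeval a r := by
    intro i
    obtain ⟨r₀, s₀, hre⟩ :=
      (mem_adjoin_simple_iff ℚ ((p.coeff i : ℝ))).mp (SetLike.coe_mem (p.coeff i))
    by_cases hs0 : Polynomial.aeval a s₀ = 0
    · refine ⟨0, 1, by simp, ?_⟩
      rw [hre, hs0]
      simp
    · refine ⟨r₀, s₀, hs0, ?_⟩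
      rw [hre]
      field_simp
  choose r s hs hrs using hrep
  set D : ℝ := ∏ j ∈ Finset.range (n+1), Polynomial.aeval a (s j) with hD
  have hD0 : D ≠ 0 := Finset.prod_ne_zero_iff.mpr (fun j _ => hs j)
  set e : Polynomial ℚ →ₐ[ℚ] MvPolynomial (Fin 2) ℚ :=
    Polynomial.aeval (X 0) with he
  set Q : MvPolynomial (Fin 2) ℚ := ∑ i ∈ Finset.range (n+1),
    e (r i * ∏ j ∈ (Finset.range (n+1)).erase i, s j) * (X 1) ^ i with hQdef
  have hkey : ∀ g : Polynomial ℚ, aeval ![a, b] (e g) = Polynomial.aeval a g := by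
    intro g
    rw [he, ← Polynomial.aeval_algHom_apply (aeval ![a, b]) (X 0) g]
    simp
  have hvanish : aeval ![a, b] Q = 0 := by
    have hterm : ∀ i ∈ Finset.range (n+1),
        aeval ![a, b] (e (r i * ∏ j ∈ (Finset.range (n+1)).erase i, s j) * (X 1) ^ i)
          = D * ((p.coeff i : ℝ) * b ^ i) := by
      intro i hi
      rw [map_mul, map_pow, aeval_X, hkey, map_mul, map_prod, ← hrs i]
      have h2 : Polynomial.aeval a (s i) *
          ∏ j ∈ (Finset.range (n+1)).erase i, Polynomial.aeval a (s j) = D := by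
        rw [hD]
        exact Finset.mul_prod_erase _ (fun j => Polynomial.aeval a (s j)) hi
      have h3 : (![a, b] 1) = b := by simp
      rw [h3, ← h2]
      ring
    rw [hQdef, map_sum, Finset.sum_congr rfl hterm, ← Finset.mul_sum]
    have hsum : ∑ i ∈ Finset.range (n+1), (p.coeff i : ℝ) * b ^ i = 0 := by
      rw [Polynomial.aeval_eq_sum_range] at hpb
      have : ∀ i ∈ Finset.range (n+1), (p.coeff i : ℝ) * b ^ i = p.coeff i • b ^ i := by
        intro i _
        rw [Algebra.smul_def]
        rfl
      rw [Finset.sum_congr rfl this]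
      exact hpb
    rw [hsum, mul_zero]
  have hQ0 : Q ≠ 0 := by
    intro h0
    set W : MvPolynomial (Fin 2) ℚ →ₐ[ℚ] Polynomial ℝ :=
      aeval ![Polynomial.C a, Polynomial.X] with hW
    have hWe : ∀ g : Polynomial ℚ, W (e g) = Polynomial.C (Polynomial.aeval a g) := by
      intro g
      rw [he, ← Polynomial.aeval_algHom_apply W (X 0) g]
      have h1 : W (X 0) = Polynomial.C a := by simp [hW]
      rw [h1, ← Polynomial.algebraMap_eq, Polynomial.aeval_algebraMap_apply,
        Polynomial.algebraMap_eq]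
    have hcoeff : (W Q).coeff n = (p.coeff n : ℝ) * D := by
      rw [hQdef, map_sum]
      have hterm2 : ∀ i ∈ Finset.range (n+1),
          W (e (r i * ∏ j ∈ (Finset.range (n+1)).erase i, s j) * (X 1) ^ i)
            = Polynomial.C (Polynomial.aeval a (r i * ∏ j ∈ (Finset.range (n+1)).erase i, s j))
              * Polynomial.X ^ i := by
        intro i _
        rw [map_mul, map_pow, aeval_X, hWe]
        simp
      rw [Finset.sum_congr rfl hterm2, Polynomial.finset_sum_coeff]
      have hterm3 : ∀ i ∈ Finset.range (n+1),
          (Polynomial.C (Polynomial.aeval a (r i * ∏ j ∈ (Finset.range (n+1)).erase i, s j))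
            * Polynomial.X ^ i).coeff n
          = if i = n then Polynomial.aeval a (r i * ∏ j ∈ (Finset.range (n+1)).erase i, s j)
            else 0 := by
        intro i _
        rw [Polynomial.coeff_C_mul, Polynomial.coeff_X_pow]
        by_cases hin : i = n
        · simp [hin]
        · simp [hin, Ne.symm hin]
      rw [Finset.sum_congr rfl hterm3, Finset.sum_ite_eq' (Finset.range (n+1)) n]
      have hnmem : n ∈ Finset.range (n+1) := Finset.self_mem_range_succ n
      rw [if_pos hnmem, map_mul, map_prod, ← hrs n, mul_assoc]
      congr 1
      rw [hD]
      exact Finset.mul_prod_erase _ (fun j => Polynomial.aeval a (s j)) hnmem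
    rw [h0, map_zero] at hcoeff
    have hc0 : (p.coeff n : ℝ) ≠ 0 := by
      intro hc
      exact hp0 (Polynomial.leadingCoeff_eq_zero.mp (ZeroMemClass.coe_eq_zero.mp hc))
    exact hc0 (by
      rcases mul_eq_zero.mp hcoeff.symm with h | h
      · exact h
      · exact absurd h hD0)
  exact not_ai_iff.mpr ⟨Q, hQ0, hvanish⟩

lemma mv_alg_const : ∀ {n : ℕ} {F : MvPolynomial (Fin n) ℚ},
    IsAlgebraic ℚ F → ∃ c : ℚ, F = C c := by
  intro n
  induction n with
  | zero =>
    intro F _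
    exact ⟨F.coeff 0, eq_C_of_isEmpty F⟩
  | succ n ih =>
    intro F halg
    set e := finSuccEquiv ℚ n with he
    have h1 : IsAlgebraic ℚ (e F) := halg.algHom e.toAlgHom
    by_cases hdeg : (e F).natDegree = 0
    · obtain ⟨g, hg⟩ := Polynomial.natDegree_eq_zero.mp hdeg
      rw [← hg] at h1
      have hCinj : Function.Injective
          (algebraMap (MvPolynomial (Fin n) ℚ) (Polynomial (MvPolynomial (Fin n) ℚ))) := by
        rw [Polynomial.algebraMap_eq]
        exact Polynomial.C_injective
      have hga : IsAlgebraic ℚ g := by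
        rw [← Polynomial.algebraMap_eq] at h1
        exact (isAlgebraic_algebraMap_iff hCinj).mp h1
      obtain ⟨c, hc⟩ := ih hga
      refine ⟨c, ?_⟩
      apply e.injective
      rw [← hg, hc]
      have : (C c : MvPolynomial (Fin (n+1)) ℚ) = algebraMap ℚ _ c :=
        (MvPolynomial.algebraMap_eq ℚ (Fin (n+1))).symm ▸ rfl
      rw [this, AlgEquiv.commutes]
      rw [show (algebraMap ℚ (Polynomial (MvPolynomial (Fin n) ℚ)) c) =
        Polynomial.C (MvPolynomial.C c) from by
          rw [← MvPolynomial.algebraMap_eq, ← Polynomial.algebraMap_eq]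
          exact (IsScalarTower.algebraMap_apply ℚ (MvPolynomial (Fin n) ℚ) _ c)]
    · exfalso
      have hne : e F ≠ 0 := fun h0 => hdeg (by rw [h0]; simp)
      have htr : Transcendental (MvPolynomial (Fin n) ℚ) (e F) :=
        Polynomial.transcendental _ hdeg
          (mem_nonZeroDivisors_of_ne_zero (Polynomial.leadingCoeff_ne_zero.mpr hne))
      have hinj : Function.Injective (algebraMap ℚ (MvPolynomial (Fin n) ℚ)) := by
        rw [MvPolynomial.algebraMap_eq]
        exact MvPolynomial.C_injective _ _
      exact (htr.restrictScalars hinj) h1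


/-- Let `F ∈ ℚ[X,Y]` be nonconstant and `t ∈ ℝ`. If the set of pairs of
Liouville numbers `(ξ, η)` with `F(ξ, η) = t` is uncountable, then `t` is
transcendental over `ℚ` if and only if there are two `ℚ`-algebraically
independent Liouville numbers `ξ, η` with `F(ξ, η) = t`. -/
theorem transcendental_iff_alg_indep_liouville_representation
    (F : MvPolynomial (Fin 2) ℚ) (hF : ∀ c : ℚ, F ≠ C c) (t : ℝ)
    (huncount : ¬ {p : ℝ × ℝ | Liouville p.1 ∧ Liouville p.2 ∧
        aeval ![p.1, p.2] F = t}.Countable) :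
    Transcendental ℚ t ↔
      ∃ ξ η : ℝ, Liouville ξ ∧ Liouville η ∧
        AlgebraicIndependent ℚ ![ξ, η] ∧ aeval ![ξ, η] F = t := by
  constructor
  · intro ht
    by_contra hn
    apply huncount
    have key : ∀ p : ℝ × ℝ, p ∈ {p : ℝ × ℝ | Liouville p.1 ∧ Liouville p.2 ∧
        aeval ![p.1, p.2] F = t} → ¬ AlgebraicIndependent ℚ ![p.1, p.2] := by
      intro p hp hAI
      exact hn ⟨p.1, p.2, hp.1, hp.2.1, hAI, hp.2.2⟩
    apply Set.Countable.mono
      (s₂ := ⋃ x ∈ {x : ℝ | Liouville x ∧ ¬ AlgebraicIndependent ℚ ![x, t]},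
        {x} ×ˢ {y : ℝ | ¬ AlgebraicIndependent ℚ ![x, y]})
    · intro p hp
      have hdep := key p hp
      have hLa : Liouville p.1 := hp.1
      have ha : Transcendental ℚ p.1 := liouville_transcendental hLa
      have halg2 : IsAlgebraic ℚ⟮p.1⟯ p.2 := isAlgebraic_of_not_ai ha hdep
      have halgt : IsAlgebraic ℚ⟮p.1⟯ t := isAlgebraic_target halg2 F hp.2.2
      have hbad : ¬ AlgebraicIndependent ℚ ![p.1, t] := not_ai_of_isAlgebraic ha halgt
      exact Set.mem_biUnion ⟨hLa, hbad⟩ (Set.mem_prod.mpr ⟨rfl, hdep⟩)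
    · apply Set.Countable.biUnion
      · exact Set.Countable.mono (fun x hx => hx.2) (countable_bad ht)
      · intro x hx
        apply Set.Countable.prod (Set.countable_singleton x)
        apply Set.Countable.mono (s₂ := {y : ℝ | ¬ AlgebraicIndependent ℚ ![y, x]})
        · intro y hy hAI
          exact hy (ai_swap hAI)
        · exact countable_bad (liouville_transcendental hx.1)
  · rintro ⟨ξ, η, hξ, hη, hAI, hval⟩
    intro halg
    obtain ⟨P, hP0, hPt⟩ := halg
    have h2 : aeval ![ξ, η] (Polynomial.aeval F P) = 0 := by
      have h1 := Polynomial.aeval_algHom_apply (aeval ![ξ, η]) F P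
      rw [← h1, hval]
      exact hPt
    have h3 : Polynomial.aeval F P = 0 := hAI.eq_zero_of_aeval_eq_zero _ h2
    obtain ⟨c, hc⟩ := mv_alg_const ⟨P, hP0, h3⟩
    exact hF c hc
end

section
/- An irrational real number t is transcendental over ℚ if and only if there exist two Liouville numbers ξ and η that are algebraically independent over ℚ and satisfy t = ξ + η. -/
open MvPolynomial Polynomial Filter Set

noncomputable section BurgerAux

/-- The substitution `X 0 ↦ X`, `X 1 ↦ C T - X` into `ℚ[T][X]`. -/
private def burgerPsi : MvPolynomial (Fin 2) ℚ →ₐ[ℚ] Polynomial (Polynomial ℚ) :=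
  MvPolynomial.aeval ![Polynomial.X, Polynomial.C Polynomial.X - Polynomial.X]

private lemma burger_comp :
    (Polynomial.eval₂RingHom (Polynomial.aeval
        (MvPolynomial.X 0 + MvPolynomial.X 1 : MvPolynomial (Fin 2) ℚ)).toRingHom
        (MvPolynomial.X 0)).comp burgerPsi.toRingHom = RingHom.id _ := by
  apply MvPolynomial.ringHom_ext
  · intro r
    simp [burgerPsi, MvPolynomial.algebraMap_eq]
  · intro i
    fin_cases i <;> simp [burgerPsi]

private lemma burgerPsi_injective : Function.Injective burgerPsi := by
  intro a b h
  have ha := RingHom.congr_fun burger_comp a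
  have hb := RingHom.congr_fun burger_comp b
  simp only [RingHom.comp_apply, RingHom.id_apply, AlgHom.toRingHom_eq_coe,
    RingHom.coe_coe] at ha hb
  rw [← ha, ← hb, h]

private lemma burger_finite (t : ℝ) (htr : Transcendental ℚ t)
    {P : MvPolynomial (Fin 2) ℚ} (hP : P ≠ 0) :
    {ξ : ℝ | MvPolynomial.aeval ![ξ, t - ξ] P = 0}.Finite := by
  set f : Polynomial ℚ →+* ℝ := (Polynomial.aeval t : Polynomial ℚ →ₐ[ℚ] ℝ).toRingHom with hf
  have hfinj : Function.Injective f := transcendental_iff_injective.mp htr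
  set Q : Polynomial ℝ := Polynomial.map f (burgerPsi P) with hQdef
  have hQ : Q ≠ 0 := by
    intro h
    apply hP
    apply burgerPsi_injective
    rw [map_zero]
    exact Polynomial.map_injective f hfinj (by simpa using h)
  have heval : ∀ ξ : ℝ, Q.eval ξ = MvPolynomial.aeval ![ξ, t - ξ] P := by
    intro ξ
    have key : ((Polynomial.evalRingHom ξ).comp (Polynomial.mapRingHom f)).comp
        burgerPsi.toRingHom
        = (MvPolynomial.aeval ![ξ, t - ξ] : MvPolynomial (Fin 2) ℚ →ₐ[ℚ] ℝ).toRingHom := by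
      apply MvPolynomial.ringHom_ext
      · intro r
        simp [burgerPsi, f, MvPolynomial.algebraMap_eq]
      · intro i
        fin_cases i <;> simp [burgerPsi, f]
    have := RingHom.congr_fun key P
    simpa [Q] using this
  refine (Polynomial.finite_setOf_isRoot hQ).subset ?_
  intro ξ hξ
  simp only [mem_setOf_eq] at hξ ⊢
  rw [Polynomial.IsRoot, heval ξ, hξ]

private instance inst_s13 : Countable (MvPolynomial (Fin 2) ℚ) := by
  unfold MvPolynomial
  exact AddMonoidAlgebra.coeff_injective.countable

end BurgerAux

/-- Burger: an irrational real number `t` is transcendental over `ℚ` if and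
only if there exist two `ℚ`-algebraically independent Liouville numbers `ξ`
and `η` with `t = ξ + η`. -/
theorem transcendental_iff_sum_of_alg_indep_liouville (t : ℝ)
    (ht : Irrational t) :
    Transcendental ℚ t ↔
      ∃ ξ η : ℝ, Liouville ξ ∧ Liouville η ∧
        AlgebraicIndependent ℚ ![ξ, η] ∧ t = ξ + η := by
  constructor
  · intro htr
    -- three residual conditions
    have E1 : ∀ᶠ x in residual ℝ, Liouville x := eventually_residual_liouville
    have hhom : Filter.Tendsto (fun x : ℝ => t - x) (residual ℝ) (residual ℝ) :=
      tendsto_residual_of_isOpenMap (by continuity) (Homeomorph.subLeft t).isOpenMap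
    have E2 : ∀ᶠ x in residual ℝ, Liouville (t - x) := hhom.eventually E1
    have E3 : ∀ᶠ x in residual ℝ, ∀ P : MvPolynomial (Fin 2) ℚ, P ≠ 0 →
        MvPolynomial.aeval ![x, t - x] P ≠ 0 := by
      rw [eventually_countable_forall]
      intro P
      rcases eq_or_ne P 0 with rfl | hP
      · filter_upwards with x h; exact absurd rfl h
      have hfin := burger_finite t htr hP
      have hmem : {ξ : ℝ | MvPolynomial.aeval ![ξ, t - ξ] P = 0}ᶜ ∈ residual ℝ :=
        residual_of_dense_open hfin.isClosed.isOpen_compl (hfin.countable.dense_compl ℝ)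
      filter_upwards [hmem] with x hx _
      exact hx
    obtain ⟨ξ, hξall⟩ := (dense_of_mem_residual ((E1.and E2).and E3)).nonempty
    obtain ⟨⟨hξ1, hξ2⟩, hξ3⟩ := hξall
    refine ⟨ξ, t - ξ, hξ1, hξ2, ?_, by ring⟩
    rw [algebraicIndependent_iff]
    intro P hP
    by_contra hne
    exact hξ3 P hne hP
  · rintro ⟨ξ, η, hξ, hη, hind, rfl⟩
    intro halg
    obtain ⟨p, hp0, hp⟩ := halg
    have h1 : MvPolynomial.aeval ![ξ, η] (Polynomial.aeval
        (MvPolynomial.X 0 + MvPolynomial.X 1 : MvPolynomial (Fin 2) ℚ) p) = 0 := by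
      rw [← Polynomial.aeval_algHom_apply]
      simpa using hp
    have hQ0 : Polynomial.aeval
        (MvPolynomial.X 0 + MvPolynomial.X 1 : MvPolynomial (Fin 2) ℚ) p = 0 :=
      algebraicIndependent_iff.mp hind _ h1
    apply hp0
    have := congrArg (MvPolynomial.aeval
      (R := ℚ) ![(Polynomial.X : Polynomial ℚ), 0]) hQ0
    rw [← Polynomial.aeval_algHom_apply] at this
    simpa using this
end

section
/- Let E be a countable subset of ℝ. Then there exists an uncountable set S of positive Liouville numbers such that every ξ ∈ S has simultaneously the following properties: (i) for every t ∈ E, ξ + t is a Liouville number; (ii) for every nonzero t ∈ E, ξ·t is a Liouville number; (iii) for every nonzero t ∈ E, the sequence defined by ξ_0 = ξ and ξ_n = exp(t·ξ_{n−1}) for n ≥ 1 consists entirely of Liouville numbers; (iv) for every nonzero rational number r, the number ξ^r (defined as exp(r·log ξ), which makes sense since ξ > 0) is a Liouville number. -/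
open Set Filter

/-- Preimage of a residual set under a continuous open map is residual. -/
lemma preimage_mem_residual_of_open {f : ℝ → ℝ} (hc : Continuous f) (ho : IsOpenMap f)
    {s : Set ℝ} (hs : s ∈ residual ℝ) : f ⁻¹' s ∈ residual ℝ := by
  rcases mem_residual_iff.1 hs with ⟨S, hSo, hSd, hSc, hSs⟩
  refine mem_residual_iff.2 ⟨(fun t => f ⁻¹' t) '' S, ?_, ?_, hSc.image _, ?_⟩
  · rintro _ ⟨t, ht, rfl⟩; exact (hSo t ht).preimage hc
  · rintro _ ⟨t, ht, rfl⟩; exact (hSd t ht).preimage ho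
  · intro x hx
    apply hSs
    intro t ht
    exact hx _ ⟨t, ht, rfl⟩

/-- The set of points whose image under a continuous open map is Liouville is residual. -/
lemma residual_liouville_comp {f : ℝ → ℝ} (hc : Continuous f) (ho : IsOpenMap f) :
    ∀ᶠ y in residual ℝ, Liouville (f y) :=
  preimage_mem_residual_of_open hc ho eventually_residual_liouville

lemma isOpenMap_exp_real : IsOpenMap Real.exp :=
  Real.isOpenEmbedding_exp.isOpenMap

lemma isOpenMap_const_mul {t : ℝ} (ht : t ≠ 0) : IsOpenMap (fun x : ℝ => t * x) :=
  (Homeomorph.mulLeft₀ t ht).isOpenMap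

lemma isOpenMap_expt {t : ℝ} (ht : t ≠ 0) : IsOpenMap (fun x : ℝ => Real.exp (t * x)) :=
  isOpenMap_exp_real.comp (isOpenMap_const_mul ht)

lemma isOpenMap_iter_expt {t : ℝ} (ht : t ≠ 0) (n : ℕ) :
    IsOpenMap ((fun x : ℝ => Real.exp (t * x))^[n]) := by
  induction n with
  | zero => simpa using IsOpenMap.id
  | succ n ih =>
    rw [Function.iterate_succ]
    exact ih.comp (isOpenMap_expt ht)

lemma continuous_expt (t : ℝ) : Continuous (fun x : ℝ => Real.exp (t * x)) :=
  Real.continuous_exp.comp (continuous_const.mul continuous_id)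

/-- A countable subset of ℝ has residual complement, so a residual set can't be countable. -/
lemma not_countable_of_mem_residual {s : Set ℝ} (hs : s ∈ residual ℝ) : ¬ s.Countable := by
  intro hc
  have h2 : sᶜ ∈ residual ℝ := by
    have : sᶜ = ⋂ x ∈ s, ({x}ᶜ : Set ℝ) := by
      ext y
      simp only [mem_compl_iff, mem_iInter, mem_singleton_iff]
      exact ⟨fun h x hx e => h (by rwa [e]), fun h hy => h y hy rfl⟩
    rw [this]
    exact (countable_bInter_mem hc).2 fun x _ =>
      residual_of_dense_open isOpen_compl_singleton (dense_compl_singleton x)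
  have h3 : (∅ : Set ℝ) ∈ residual ℝ := by
    have := inter_mem hs h2
    simpa using this
  have := dense_of_mem_residual h3
  rcases this.exists_mem_open isOpen_univ ⟨(0 : ℝ), trivial⟩ with ⟨x, hx, -⟩
  exact hx

/-- Let `E` be a countable subset of `ℝ`. Then there is an uncountable set `S`
of positive Liouville numbers `ξ` such that simultaneously:
(i) `ξ + t` is Liouville for all `t ∈ E`;
(ii) `ξ * t` is Liouville for all nonzero `t ∈ E`;
(iii) for every nonzero `t ∈ E`, the sequence `ξ_0 = ξ`, `ξ_n = exp (t * ξ_{n-1})`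
consists of Liouville numbers;
(iv) `ξ ^ r = exp (r * log ξ)` is Liouville for every nonzero rational `r`. -/
theorem uncountable_liouville_stable_family (E : Set ℝ) (hE : E.Countable) :
    ∃ S : Set ℝ, ¬ S.Countable ∧ ∀ ξ ∈ S,
      (0 < ξ ∧ Liouville ξ) ∧
      (∀ t ∈ E, Liouville (ξ + t)) ∧
      (∀ t ∈ E, t ≠ 0 → Liouville (ξ * t)) ∧
      (∀ t ∈ E, t ≠ 0 → ∀ n : ℕ, Liouville ((fun x => Real.exp (t * x))^[n] ξ)) ∧
      (∀ r : ℚ, r ≠ 0 → Liouville (Real.exp (r * Real.log ξ))) := by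
  -- We work with ξ = exp y and find a residual set of good y's.
  have h0 : ∀ᶠ y in residual ℝ, Liouville (Real.exp y) :=
    residual_liouville_comp Real.continuous_exp isOpenMap_exp_real
  have h1 : ∀ᶠ y in residual ℝ, ∀ t ∈ E, Liouville (Real.exp y + t) := by
    rw [eventually_countable_ball hE]
    intro t _
    exact residual_liouville_comp (Real.continuous_exp.add continuous_const)
      ((Homeomorph.addRight t).isOpenMap.comp isOpenMap_exp_real)
  have h2 : ∀ᶠ y in residual ℝ, ∀ t ∈ E, t ≠ 0 → Liouville (Real.exp y * t) := by
    rw [eventually_countable_ball hE]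
    intro t _
    rcases eq_or_ne t 0 with rfl | ht
    · filter_upwards with y h; exact absurd rfl h
    · have : ∀ᶠ y in residual ℝ, Liouville (Real.exp y * t) := by
        have : (fun y : ℝ => Real.exp y * t) = (fun x : ℝ => t * x) ∘ Real.exp := by
          funext y; simp [mul_comm]
        refine residual_liouville_comp ?_ ?_
        · exact Real.continuous_exp.mul continuous_const
        · rw [this]; exact (isOpenMap_const_mul ht).comp isOpenMap_exp_real
      filter_upwards [this] with y hy _
      exact hy
  have h3 : ∀ᶠ y in residual ℝ, ∀ t ∈ E, t ≠ 0 → ∀ n : ℕ,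
      Liouville ((fun x => Real.exp (t * x))^[n] (Real.exp y)) := by
    rw [eventually_countable_ball hE]
    intro t _
    rcases eq_or_ne t 0 with rfl | ht
    · filter_upwards with y h; exact absurd rfl h
    · have : ∀ᶠ y in residual ℝ, ∀ n : ℕ,
          Liouville ((fun x => Real.exp (t * x))^[n] (Real.exp y)) := by
        rw [eventually_countable_forall]
        intro n
        refine residual_liouville_comp ?_ ?_
        · exact ((continuous_expt t).iterate n).comp Real.continuous_exp
        · exact (isOpenMap_iter_expt ht n).comp isOpenMap_exp_real
      filter_upwards [this] with y hy _
      exact hy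
  have h4 : ∀ᶠ y in residual ℝ, ∀ r : ℚ, r ≠ 0 → Liouville (Real.exp ((r : ℝ) * y)) := by
    rw [eventually_countable_forall]
    intro r
    rcases eq_or_ne r 0 with rfl | hr
    · filter_upwards with y h; exact absurd rfl h
    · have hr' : (r : ℝ) ≠ 0 := by exact_mod_cast hr
      have : ∀ᶠ y in residual ℝ, Liouville (Real.exp ((r : ℝ) * y)) :=
        residual_liouville_comp (continuous_expt _) (isOpenMap_expt hr')
      filter_upwards [this] with y hy _
      exact hy
  have hT : {y : ℝ | Liouville (Real.exp y) ∧ (∀ t ∈ E, Liouville (Real.exp y + t)) ∧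
      (∀ t ∈ E, t ≠ 0 → Liouville (Real.exp y * t)) ∧
      (∀ t ∈ E, t ≠ 0 → ∀ n : ℕ, Liouville ((fun x => Real.exp (t * x))^[n] (Real.exp y))) ∧
      (∀ r : ℚ, r ≠ 0 → Liouville (Real.exp ((r : ℝ) * y)))} ∈ residual ℝ := by
    filter_upwards [h0, h1, h2, h3, h4] with y a b c d e
    exact ⟨a, b, c, d, e⟩
  set T := {y : ℝ | Liouville (Real.exp y) ∧ (∀ t ∈ E, Liouville (Real.exp y + t)) ∧
      (∀ t ∈ E, t ≠ 0 → Liouville (Real.exp y * t)) ∧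
      (∀ t ∈ E, t ≠ 0 → ∀ n : ℕ, Liouville ((fun x => Real.exp (t * x))^[n] (Real.exp y))) ∧
      (∀ r : ℚ, r ≠ 0 → Liouville (Real.exp ((r : ℝ) * y)))} with hTdef
  refine ⟨Real.exp '' T, ?_, ?_⟩
  · intro hc
    exact not_countable_of_mem_residual hT
      ((hc.preimage Real.exp_injective).mono (subset_preimage_image _ _))
  · rintro ξ ⟨y, hy, rfl⟩
    obtain ⟨a, b, c, d, e⟩ := hy
    refine ⟨⟨Real.exp_pos y, a⟩, b, c, d, fun r hr => ?_⟩
    rw [Real.log_exp]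
    exact e r hr
end

section
/- Let I be an interval of ℝ with nonempty interior and let φ : I → I be a continuous bijective map with inverse ψ. Then the set of ξ ∈ I such that φ^n(ξ) is a Liouville number for every n ∈ ℤ (where φ^0 is the identity, φ^n is the n-fold iterate of φ for n ≥ 1, and φ^{−n} is the n-fold iterate of ψ for n ≥ 1) is a G_δ-subset of I, and hence is uncountable. -/
/-- The `ℤ`-indexed iterates of a bijection `φ` with inverse `ψ`: `φ^[n]` for
`n ≥ 0` and `ψ^[n]` for `n < 0`. -/
def zIter {α : Type*} (φ ψ : α → α) : ℤ → α → α
  | Int.ofNat n => φ^[n]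
  | Int.negSucc n => ψ^[n + 1]

lemma isOpenMap_iterate {α : Type*} [TopologicalSpace α] {f : α → α}
    (h : IsOpenMap f) (n : ℕ) : IsOpenMap f^[n] := by
  induction n with
  | zero => exact IsOpenMap.id
  | succ n ih => rw [Function.iterate_succ]; exact ih.comp h

/-- Let `I` be an interval of `ℝ` with nonempty interior and `φ : I → I` a
continuous bijection with inverse `ψ`. Then the set of `ξ ∈ I` whose whole
orbit `{φ^n ξ : n ∈ ℤ}` consists of Liouville numbers is a `G_δ`-subset of
`I`, hence uncountable. -/
theorem orbit_liouville_gdelta (I : Set ℝ) (hI : I.OrdConnected)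
    (hint : (interior I).Nonempty)
    (φ : I → I) (hφc : Continuous φ) (hφb : Function.Bijective φ)
    (ψ : I → I) (hψl : Function.LeftInverse ψ φ)
    (hψr : Function.RightInverse ψ φ) :
    IsGdeltaDense {ξ : I | ∀ n : ℤ, Liouville ((zIter φ ψ n ξ : I) : ℝ)} ∧
      ¬ {ξ : I | ∀ n : ℤ, Liouville ((zIter φ ψ n ξ : I) : ℝ)}.Countable := by
  classical
  obtain ⟨a, ha⟩ := hint
  have hIa : a ∈ I := interior_subset ha
  haveI : Set.OrdConnected I := hI
  haveI : Inhabited ↥I := ⟨⟨a, hIa⟩⟩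
  -- `φ` is a homeomorphism of `I`.
  have hH : ∃ H : ↥I ≃ₜ ↥I, ⇑H = φ := by
    rcases hφc.strictMono_of_inj hφb.1 with h | h
    · exact ⟨(StrictMono.orderIsoOfSurjective φ h hφb.2).toHomeomorph, rfl⟩
    · have h' : StrictMono (OrderDual.toDual ∘ φ : ↥I → (↥I)ᵒᵈ) :=
        strictMono_toDual_comp_iff.mpr h
      have hsurj : Function.Surjective (OrderDual.toDual ∘ φ : ↥I → (↥I)ᵒᵈ) :=
        (OrderDual.toDual : ↥I ≃ (↥I)ᵒᵈ).surjective.comp hφb.2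
      let e := StrictMono.orderIsoOfSurjective _ h' hsurj
      let d : (↥I)ᵒᵈ ≃ₜ ↥I :=
        { toEquiv := OrderDual.ofDual
          continuous_toFun := continuous_ofDual
          continuous_invFun := continuous_toDual }
      exact ⟨e.toHomeomorph.trans d, rfl⟩
  obtain ⟨H, hHφ⟩ := hH
  have hψH : ψ = ⇑H.symm := by
    funext x
    apply hφb.1
    rw [hψr x, ← hHφ]
    exact (H.apply_symm_apply x).symm
  have hψc : Continuous ψ := hψH ▸ H.symm.continuous
  have hφo : IsOpenMap φ := hHφ ▸ H.isOpenMap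
  have hψo : IsOpenMap ψ := hψH ▸ H.symm.isOpenMap
  have hcont : ∀ n : ℤ, Continuous (zIter φ ψ n) := by
    intro n
    cases n with
    | ofNat n => exact hφc.iterate n
    | negSucc n => exact hψc.iterate (n + 1)
  have hopen : ∀ n : ℤ, IsOpenMap (zIter φ ψ n) := by
    intro n
    cases n with
    | ofNat n => exact isOpenMap_iterate hφo n
    | negSucc n => exact isOpenMap_iterate hψo (n + 1)
  -- the interior of `I` is dense in `I`
  have Hd : I ⊆ closure (interior I) := by
    intro x hx
    rcases lt_trichotomy x a with hxa | rfl | hax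
    · have h1 : Set.Ioo x a ⊆ I := fun y hy => hI.out hx hIa ⟨hy.1.le, hy.2.le⟩
      have h2 : Set.Ioo x a ⊆ interior I := interior_maximal h1 isOpen_Ioo
      have h3 : x ∈ closure (Set.Ioo x a) := by
        rw [closure_Ioo hxa.ne]
        exact ⟨le_refl x, hxa.le⟩
      exact closure_mono h2 h3
    · exact subset_closure ha
    · have h1 : Set.Ioo a x ⊆ I := fun y hy => hI.out hIa hx ⟨hy.1.le, hy.2.le⟩
      have h2 : Set.Ioo a x ⊆ interior I := interior_maximal h1 isOpen_Ioo
      have h3 : x ∈ closure (Set.Ioo a x) := by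
        rw [closure_Ioo hax.ne]
        exact ⟨hax.le, le_refl x⟩
      exact closure_mono h2 h3
  -- preimages in `I` of dense open subsets of `ℝ` are dense
  have hdense_pre : ∀ u : Set ℝ, Dense u → Dense (Subtype.val ⁻¹' u : Set ↥I) := by
    intro u hud x
    rw [closure_subtype]
    have himg : Subtype.val '' (Subtype.val ⁻¹' u : Set ↥I) = u ∩ I := by
      rw [Set.image_preimage_eq_inter_range, Subtype.range_val]
    rw [himg]
    have h1 : interior I ⊆ closure (interior I ∩ u) :=
      hud.open_subset_closure_inter isOpen_interior
    have h2 : closure (interior I) ⊆ closure (interior I ∩ u) :=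
      closure_minimal h1 isClosed_closure
    have h3 : x.1 ∈ closure (interior I ∩ u) := h2 (Hd x.2)
    have hsub : interior I ∩ u ⊆ u ∩ I := fun y hy => ⟨hy.2, interior_subset hy.1⟩
    exact closure_mono hsub h3
  obtain ⟨T₀, hT₀o, hT₀c, hT₀⟩ := IsGδ.setOf_liouville
  have hT₀d : ∀ u ∈ T₀, Dense u := fun u hu =>
    dense_liouville.mono (by rw [hT₀]; exact Set.sInter_subset_of_mem hu)
  set S := {ξ : ↥I | ∀ n : ℤ, Liouville ((zIter φ ψ n ξ : ↥I) : ℝ)} with hSdef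
  let F : ℤ × Set ℝ → Set ↥I := fun p => zIter φ ψ p.1 ⁻¹' (Subtype.val ⁻¹' p.2)
  have hTdef : IsGdeltaDense S := by
    refine ⟨F '' (Set.univ ×ˢ T₀), (Set.countable_univ.prod hT₀c).image F, ?_, ?_⟩
    · rintro t ⟨⟨n, u⟩, ⟨-, hu⟩, rfl⟩
      constructor
      · exact ((hT₀o u hu).preimage continuous_subtype_val).preimage (hcont n)
      · exact (hdense_pre u (hT₀d u hu)).preimage (hopen n)
    · ext ξ
      constructor
      · intro hξ
        refine Set.mem_sInter.mpr ?_
        rintro t ⟨⟨n, u⟩, ⟨-, hu⟩, rfl⟩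
        have h2 : ((zIter φ ψ n ξ : ↥I) : ℝ) ∈ ⋂₀ T₀ := by
          rw [← hT₀]; exact hξ n
        exact Set.mem_sInter.mp h2 u hu
      · intro hξ n
        have hmem : ∀ u ∈ T₀, ((zIter φ ψ n ξ : ↥I) : ℝ) ∈ u := fun u hu =>
          Set.mem_sInter.mp hξ (F (n, u)) ⟨(n, u), ⟨Set.mem_univ n, hu⟩, rfl⟩
        have h3 : ((zIter φ ψ n ξ : ↥I) : ℝ) ∈ {x : ℝ | Liouville x} := by
          rw [hT₀]; exact Set.mem_sInter.mpr hmem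
        exact h3
  refine ⟨hTdef, ?_⟩
  intro hSc
  obtain ⟨T, hTc, hTod, hTS⟩ := hTdef
  have hrep : ∀ t ∈ T, ∃ u : Set ℝ, IsOpen u ∧ Subtype.val ⁻¹' u = t := fun t ht =>
    isOpen_induced_iff.mp (hTod t ht).1
  choose! u huo hup using hrep
  set V := interior I with hV
  have hVsub : V ⊆ I := interior_subset
  have hVd : ∀ t ∈ T, V ⊆ closure (u t ∩ V) := by
    intro t ht x hx
    have hxI : x ∈ I := hVsub hx
    have h1 : (⟨x, hxI⟩ : ↥I) ∈ closure t := (hTod t ht).2 _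
    rw [closure_subtype] at h1
    have himg : Subtype.val '' t = u t ∩ I := by
      conv_lhs => rw [← hup t ht]
      rw [Set.image_preimage_eq_inter_range, Subtype.range_val]
    rw [himg] at h1
    have h3 := isOpen_interior.inter_closure (⟨hx, h1⟩ : x ∈ interior I ∩ closure (u t ∩ I))
    refine closure_mono ?_ h3
    rintro y ⟨hyV, hyu, -⟩
    exact ⟨hyu, hyV⟩
  set C : Set (Set ℝ) :=
    ((fun t => (u t ∩ V) ∪ (closure V)ᶜ) '' T) ∪ ((fun x : ↥I => ({(x : ℝ)}ᶜ : Set ℝ)) '' S)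
    with hC
  have hCc : C.Countable := (hTc.image _).union (hSc.image _)
  have hCo : ∀ s ∈ C, IsOpen s := by
    rintro s (⟨t, ht, rfl⟩ | ⟨x, hx, rfl⟩)
    · exact ((huo t ht).inter isOpen_interior).union isClosed_closure.isOpen_compl
    · exact isOpen_compl_singleton
  have hCd : ∀ s ∈ C, Dense s := by
    rintro s (⟨t, ht, rfl⟩ | ⟨x, hx, rfl⟩)
    · intro y
      by_cases hy : y ∈ closure V
      · have h1 : closure V ⊆ closure (u t ∩ V) :=
          closure_minimal (hVd t ht) isClosed_closure
        exact closure_mono Set.subset_union_left (h1 hy)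
      · exact subset_closure (Or.inr hy)
    · exact dense_compl_singleton _
  have hdense : Dense (⋂₀ C) := dense_sInter_of_isOpen hCo hCc hCd
  obtain ⟨y, hyV, hyC⟩ := hdense.inter_open_nonempty V isOpen_interior ⟨a, ha⟩
  have hyI : y ∈ I := hVsub hyV
  have hyS : (⟨y, hyI⟩ : ↥I) ∈ S := by
    rw [hTS]
    refine Set.mem_sInter.mpr fun t ht => ?_
    have h1 : y ∈ (u t ∩ V) ∪ (closure V)ᶜ :=
      Set.mem_sInter.mp hyC _ (Or.inl ⟨t, ht, rfl⟩)
    rcases h1 with h1 | h1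
    · rw [← hup t ht]; exact h1.1
    · exact absurd (subset_closure hyV) h1
  have h2 : y ∈ ({((⟨y, hyI⟩ : ↥I) : ℝ)}ᶜ : Set ℝ) :=
    Set.mem_sInter.mp hyC _ (Or.inr ⟨⟨y, hyI⟩, hyS, rfl⟩)
  exact h2 rfl
end

section
/- Let g_1, …, g_n be polynomials in ℂ[z]. The following are equivalent: (i) for all 1 ≤ i < j ≤ n, the polynomial g_i − g_j is not constant; (ii) the entire functions e^{g_1}, …, e^{g_n} are linearly independent over ℂ(z), i.e., for all polynomials A_1, …, A_n ∈ ℂ[z], not all zero, the function z ↦ A_1(z)·exp(g_1(z)) + ⋯ + A_n(z)·exp(g_n(z)) is not identically zero on ℂ. -/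
open Polynomial

/-- If `A ≠ 0` and `q ≠ 0` then `A' + A*q ≠ 0`. -/
lemma aux_deriv_ne (A q : Polynomial ℂ) (hA : A ≠ 0) (hq : q ≠ 0) :
    derivative A + A * q ≠ 0 := by
  rcases eq_or_ne A.natDegree 0 with h0 | h0
  · obtain ⟨c, hc⟩ := natDegree_eq_zero.mp h0
    rw [← hc, derivative_C, zero_add]
    exact mul_ne_zero (by simpa [← hc] using hA) hq
  · intro h
    have hd : derivative A = -(A * q) := by linear_combination h
    have h1 : (derivative A).natDegree < A.natDegree := natDegree_derivative_lt h0
    have h2 : (A * q).natDegree = A.natDegree + q.natDegree := natDegree_mul hA hq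
    rw [hd, natDegree_neg, h2] at h1
    omega

/-- Key lemma: if the differences have nonzero derivatives, the exponentials are
linearly independent over polynomials. -/
lemma key : ∀ n (g : Fin n → Polynomial ℂ),
    (∀ i j : Fin n, i ≠ j → derivative (g i - g j) ≠ 0) →
    ∀ A : Fin n → Polynomial ℂ,
      (∀ z : ℂ, ∑ i, (A i).eval z * Complex.exp ((g i).eval z) = 0) →
      ∀ i, A i = 0 := by
  intro n
  induction n with
  | zero => intro g hg A hA i; exact absurd i.pos (by omega)
  | succ n ih =>
    intro g hg A hA
    -- normalize: subtract g (last)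
    set h : Fin (n+1) → Polynomial ℂ := fun i => g i - g (Fin.last n) with hh
    have hsum : ∀ (A : Fin (n+1) → Polynomial ℂ),
        (∀ z : ℂ, ∑ i, (A i).eval z * Complex.exp ((g i).eval z) = 0) →
        (∀ z : ℂ, ∑ i, (A i).eval z * Complex.exp ((h i).eval z) = 0) := by
      intro A hA z
      have e1 : ∀ i : Fin (n+1), Complex.exp ((g i).eval z)
          = Complex.exp ((h i).eval z) * Complex.exp ((g (Fin.last n)).eval z) := by
        intro i
        rw [← Complex.exp_add, hh]
        simp [eval_sub]
      have e2 : (∑ i, (A i).eval z * Complex.exp ((h i).eval z))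
          * Complex.exp ((g (Fin.last n)).eval z) = 0 := by
        rw [Finset.sum_mul]
        rw [← hA z]
        exact Finset.sum_congr rfl (fun i _ => by rw [e1 i]; ring
)
      exact (mul_eq_zero.mp e2).resolve_right (Complex.exp_ne_zero _)
    have hA' := hsum A hA
    clear hA
    -- measure induction
    have claim : ∀ m (A : Fin (n+1) → Polynomial ℂ),
        (if A (Fin.last n) = 0 then 0 else (A (Fin.last n)).natDegree + 1) ≤ m →
        (∀ z : ℂ, ∑ i, (A i).eval z * Complex.exp ((h i).eval z) = 0) →
        ∀ i, A i = 0 := by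
      intro m
      induction m with
      | zero =>
        intro A hm hA
        have hlast : A (Fin.last n) = 0 := by
          by_contra hne; simp [hne] at hm
        have hzero : ∀ z : ℂ, ∑ i : Fin n, (A i.castSucc).eval z
            * Complex.exp ((h i.castSucc).eval z) = 0 := by
          intro z
          have := hA z
          rw [Fin.sum_univ_castSucc, hlast] at this
          simpa using this
        have hg' : ∀ i j : Fin n, i ≠ j →
            derivative (h i.castSucc - h j.castSucc) ≠ 0 := by
          intro i j hij
          have : h i.castSucc - h j.castSucc = g i.castSucc - g j.castSucc := by
            rw [hh]; ring
          rw [this]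
          exact hg _ _ (fun e => hij (Fin.castSucc_injective n e))
        have := ih (fun i => h i.castSucc) hg' (fun i => A i.castSucc) hzero
        intro i
        refine Fin.lastCases hlast (fun j => this j) i
      | succ m ihm =>
        intro A hm hA
        rcases eq_or_ne (A (Fin.last n)) 0 with hlast | hlast
        · -- same as base case
          have hzero : ∀ z : ℂ, ∑ i : Fin n, (A i.castSucc).eval z
              * Complex.exp ((h i.castSucc).eval z) = 0 := by
            intro z
            have := hA z
            rw [Fin.sum_univ_castSucc, hlast] at this
            simpa using this
          have hg' : ∀ i j : Fin n, i ≠ j →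
              derivative (h i.castSucc - h j.castSucc) ≠ 0 := by
            intro i j hij
            have : h i.castSucc - h j.castSucc = g i.castSucc - g j.castSucc := by
              rw [hh]; ring
            rw [this]
            exact hg _ _ (fun e => hij (Fin.castSucc_injective n e))
          have := ih (fun i => h i.castSucc) hg' (fun i => A i.castSucc) hzero
          intro i
          refine Fin.lastCases hlast (fun j => this j) i
        · -- differentiate
          set B : Fin (n+1) → Polynomial ℂ :=
            fun i => derivative (A i) + A i * derivative (h i) with hB
          have hBlast : B (Fin.last n) = derivative (A (Fin.last n)) := by
            rw [hB]
            simp [hh]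
          have hBsum : ∀ z : ℂ, ∑ i, (B i).eval z
              * Complex.exp ((h i).eval z) = 0 := by
            intro z
            have hf : (fun w : ℂ => ∑ i, (A i).eval w * Complex.exp ((h i).eval w))
                = fun _ => (0:ℂ) := funext hA
            have hd : HasDerivAt
                (fun w : ℂ => ∑ i, (A i).eval w * Complex.exp ((h i).eval w))
                (∑ i, (B i).eval z * Complex.exp ((h i).eval z)) z := by
              have : ∀ i ∈ Finset.univ, HasDerivAt
                  (fun w : ℂ => (A i).eval w * Complex.exp ((h i).eval w))
                  ((B i).eval z * Complex.exp ((h i).eval z)) z := by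
                intro i _
                have h1 := ((A i).hasDerivAt z).fun_mul (((h i).hasDerivAt z).cexp)
                refine h1.congr_deriv (Eq.symm ?_)
                rw [hB]
                simp [eval_add, eval_mul]
                ring
              exact HasDerivAt.fun_sum this
            rw [hf] at hd
            have h0 : HasDerivAt (fun _ : ℂ => (0:ℂ)) 0 z := hasDerivAt_const z 0
            exact hd.unique h0
          have hmB : (if B (Fin.last n) = 0 then 0
              else (B (Fin.last n)).natDegree + 1) ≤ m := by
            rw [hBlast]
            rcases eq_or_ne (derivative (A (Fin.last n))) 0 with hd0 | hd0
            · simp [hd0]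
            · have hnd : (A (Fin.last n)).natDegree ≠ 0 := by
                intro h0
                exact hd0 (by
                  obtain ⟨c, hc⟩ := natDegree_eq_zero.mp h0
                  rw [← hc, derivative_C])
              have := natDegree_derivative_lt (p := A (Fin.last n)) hnd
              rw [if_neg hd0]
              rw [if_neg hlast] at hm
              omega
          have hBzero := ihm B hmB hBsum
          -- from B i = 0 for i < last, deduce A i = 0
          have hAcast : ∀ i : Fin n, A i.castSucc = 0 := by
            intro i
            by_contra hAi
            have hdh : derivative (h i.castSucc) ≠ 0 := by
              rw [hh]
              exact hg _ _ (by simp [Fin.ext_iff, Fin.castSucc]; omega)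
            exact aux_deriv_ne _ _ hAi hdh (hBzero i.castSucc)
          -- then A last evals to zero
          have : ∀ z : ℂ, (A (Fin.last n)).eval z = 0 := by
            intro z
            have := hA z
            rw [Fin.sum_univ_castSucc] at this
            have hl : (h (Fin.last n)).eval z = 0 := by simp [hh]
            simp [hAcast, hl] at this
            exact this
          exact absurd (Polynomial.zero_of_eval_zero _ this) hlast
    exact claim _ A le_rfl hA'

/-- Let `g 1, …, g n ∈ ℂ[z]`. The differences `g i - g j` (for `i < j`) are all
nonconstant if and only if the entire functions `e^{g 1}, …, e^{g n}` are
linearly independent over `ℂ(z)`: for all polynomials `A 1, …, A n`, not all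
zero, the function `z ↦ ∑ i, A i (z) * exp (g i (z))` is not identically
zero. -/
theorem exp_poly_linear_independent (n : ℕ) (g : Fin n → Polynomial ℂ) :
    (∀ i j : Fin n, i < j → ∀ c : ℂ, g i - g j ≠ Polynomial.C c) ↔
      (∀ A : Fin n → Polynomial ℂ, (∃ i, A i ≠ 0) →
        ∃ z : ℂ, ∑ i, (A i).eval z * Complex.exp ((g i).eval z) ≠ 0) := by
  constructor
  · intro hnc A ⟨i0, hi0⟩
    by_contra hz
    push_neg at hz
    have hg : ∀ i j : Fin n, i ≠ j → derivative (g i - g j) ≠ 0 := by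
      intro i j hij hd
      have hconst : ∀ (P : Polynomial ℂ), derivative P = 0 → ∃ c, P = Polynomial.C c := by
        intro P hP
        obtain ⟨c, hc⟩ := natDegree_eq_zero.mp (natDegree_eq_zero_of_derivative_eq_zero hP)
        exact ⟨c, hc.symm⟩
      rcases lt_or_gt_of_ne hij with hlt | hlt
      · obtain ⟨c, hc⟩ := hconst _ hd
        exact hnc i j hlt c hc
      · have hd' : derivative (g j - g i) = 0 := by
          have : g j - g i = -(g i - g j) := by ring
          rw [this, derivative_neg, hd, neg_zero]
        obtain ⟨c, hc⟩ := hconst _ hd'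
        exact hnc j i hlt c hc
    exact hi0 (key n g hg A hz i0)
  · intro hli i j hij c hc
    by_contra _
    set A : Fin n → Polynomial ℂ :=
      fun k => if k = i then 1 else if k = j then Polynomial.C (-Complex.exp c) else 0 with hAdef
    have hne : i ≠ j := ne_of_lt hij
    obtain ⟨z, hz⟩ := hli A ⟨i, by simp [hAdef]⟩
    apply hz
    have hv : (g i).eval z - (g j).eval z = c := by
      rw [← eval_sub, hc, eval_C]
    have hsplit : ∀ k : Fin n, (A k).eval z * Complex.exp ((g k).eval z)
        = (if k = i then Complex.exp ((g i).eval z) else 0)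
          + (if k = j then -Complex.exp c * Complex.exp ((g j).eval z) else 0) := by
      intro k
      rcases eq_or_ne k i with rfl | hki
      · simp [hAdef, hne]
      · rcases eq_or_ne k j with rfl | hkj
        · simp [hAdef, hki]
        · simp [hAdef, hki, hkj]
    rw [Finset.sum_congr rfl (fun k _ => hsplit k), Finset.sum_add_distrib]
    simp only [Finset.sum_ite_eq', Finset.mem_univ, if_true]
    have : Complex.exp ((g i).eval z) = Complex.exp c * Complex.exp ((g j).eval z) := by
      rw [← Complex.exp_add]
      congr 1
      linear_combination hv
    rw [this]
    ring
end

section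
/- Let f_1, …, f_m be polynomials in ℂ[z]. The following are equivalent: (i) for every nonzero tuple (a_1, …, a_m) ∈ ℤ^m, the polynomial a_1 f_1 + ⋯ + a_m f_m is not constant; (ii) the entire functions e^{f_1}, …, e^{f_m} are algebraically independent over ℂ(z), i.e., for every nonzero polynomial P ∈ ℂ[z][X_1, …, X_m] in m variables with coefficients in ℂ[z], the function z ↦ P(z; exp(f_1(z)), …, exp(f_m(z))) is not identically zero on ℂ. -/
open Polynomial

private lemma deg_contra (p q h : Polynomial ℂ) (hp : p ≠ 0) (hq : q ≠ 0)
    (hh : 0 < h.natDegree)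
    (e : q * derivative p - derivative q * p + q * p * derivative h = 0) : False := by
  have hh' : derivative h ≠ 0 := fun h0 => by
    have := Polynomial.natDegree_eq_zero_of_derivative_eq_zero h0; omega
  have e' : q * (derivative p + p * derivative h) = derivative q * p := by
    linear_combination e
  have h1 : (derivative p).degree < (p * derivative h).degree := by
    rw [degree_mul]
    calc (derivative p).degree < p.degree := degree_derivative_lt hp
      _ ≤ p.degree + (derivative h).degree :=
        le_add_of_nonneg_right (zero_le_degree_iff.mpr hh')
  have h2 : (derivative p + p * derivative h).degree = (p * derivative h).degree :=
    degree_add_eq_right_of_degree_lt h1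
  have hL : (q * (derivative p + p * derivative h)).degree
      = q.degree + (p.degree + (derivative h).degree) := by
    rw [degree_mul, h2, degree_mul]
  have hR : (derivative q * p).degree < q.degree + p.degree := by
    rw [degree_mul]
    exact WithBot.add_lt_add_right (fun hb => hp (degree_eq_bot.mp hb))
      (degree_derivative_lt hq)
  have hle : q.degree + p.degree ≤ q.degree + (p.degree + (derivative h).degree) := by
    rw [← add_assoc]
    exact le_add_of_nonneg_right (zero_le_degree_iff.mpr hh')
  rw [← e', hL] at hR
  exact absurd (hR.trans_le hle) (lt_irrefl _)

private lemma exp_indep {ι : Type*} [DecidableEq ι] (s : Finset ι) :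
    ∀ (c g : ι → Polynomial ℂ),
    (∀ i ∈ s, ∀ j ∈ s, i ≠ j → 0 < (g i - g j).natDegree) →
    (∀ z : ℂ, ∑ i ∈ s, (c i).eval z * Complex.exp ((g i).eval z) = 0) →
    ∀ i ∈ s, c i = 0 := by
  induction s using Finset.induction_on with
  | empty => simp
  | @insert a t ha ih =>
    intro c g hg hz
    -- the derivative of the identically-zero sum is zero
    have hderiv : ∀ z : ℂ, ∑ i ∈ insert a t,
        ((derivative (c i)).eval z + (c i).eval z * (derivative (g i)).eval z) *
          Complex.exp ((g i).eval z) = 0 := by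
      intro z
      have hF : HasDerivAt (fun w => ∑ i ∈ insert a t, (c i).eval w * Complex.exp ((g i).eval w))
          (∑ i ∈ insert a t,
            ((derivative (c i)).eval z + (c i).eval z * (derivative (g i)).eval z) *
              Complex.exp ((g i).eval z)) z := by
        apply HasDerivAt.fun_sum
        intro i _
        have h1 : HasDerivAt (fun w => (c i).eval w) ((derivative (c i)).eval z) z :=
          (c i).hasDerivAt z
        have h2 : HasDerivAt (fun w => Complex.exp ((g i).eval w))
            (Complex.exp ((g i).eval z) * (derivative (g i)).eval z) z :=
          ((g i).hasDerivAt z).cexp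
        have := h1.fun_mul h2
        exact this.congr_deriv (by ring)
      have h0 : (fun w => ∑ i ∈ insert a t, (c i).eval w * Complex.exp ((g i).eval w))
          = fun _ => (0 : ℂ) := funext hz
      rw [h0] at hF
      exact hF.unique (hasDerivAt_const z 0)
    set d : ι → Polynomial ℂ := fun i =>
      c a * derivative (c i) - derivative (c a) * c i +
        c a * c i * (derivative (g i) - derivative (g a)) with hd
    have hzd : ∀ z : ℂ, ∑ i ∈ t, (d i).eval z * Complex.exp ((g i).eval z) = 0 := by
      intro z
      have expand : ∑ i ∈ t, (d i).eval z * Complex.exp ((g i).eval z)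
          = (c a).eval z * (∑ i ∈ insert a t,
              ((derivative (c i)).eval z + (c i).eval z * (derivative (g i)).eval z) *
                Complex.exp ((g i).eval z))
            - ((derivative (c a)).eval z + (c a).eval z * (derivative (g a)).eval z) *
              (∑ i ∈ insert a t, (c i).eval z * Complex.exp ((g i).eval z)) := by
        rw [Finset.mul_sum, Finset.mul_sum, ← Finset.sum_sub_distrib, Finset.sum_insert ha]
        have hterm : (c a).eval z *
            (((derivative (c a)).eval z + (c a).eval z * (derivative (g a)).eval z) *
              Complex.exp ((g a).eval z))
            - ((derivative (c a)).eval z + (c a).eval z * (derivative (g a)).eval z) *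
              ((c a).eval z * Complex.exp ((g a).eval z)) = 0 := by ring
        rw [hterm, zero_add]
        refine Finset.sum_congr rfl fun i _ => ?_
        simp only [hd, Polynomial.eval_add, Polynomial.eval_sub, Polynomial.eval_mul]
        ring
      rw [expand, hderiv z, hz z]
      ring
    have hdz : ∀ i ∈ t, d i = 0 :=
      ih d g (fun i hi j hj hij =>
        hg i (Finset.mem_insert_of_mem hi) j (Finset.mem_insert_of_mem hj) hij) hzd
    have hca : c a = 0 := by
      by_contra hca
      have hct : ∀ i ∈ t, c i = 0 := by
        intro i hi
        by_contra hci
        have hgi : 0 < (g i - g a).natDegree :=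
          hg i (Finset.mem_insert_of_mem hi) a (Finset.mem_insert_self a t)
            (by rintro rfl; exact ha hi)
        refine deg_contra (c i) (c a) (g i - g a) hci hca hgi ?_
        have hthis := hdz i hi
        rw [hd] at hthis
        rw [Polynomial.derivative_sub]
        exact hthis
      have hza : ∀ z : ℂ, (c a).eval z * Complex.exp ((g a).eval z) = 0 := by
        intro z
        have h0 := hz z
        rw [Finset.sum_insert ha] at h0
        have h2 : ∑ i ∈ t, (c i).eval z * Complex.exp ((g i).eval z) = 0 :=
          Finset.sum_eq_zero fun i hi => by rw [hct i hi]; simp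
        rw [h2, add_zero] at h0
        exact h0
      exact hca (Polynomial.zero_of_eval_zero _ fun z =>
        (mul_eq_zero.mp (hza z)).resolve_right (Complex.exp_ne_zero _))
    have hzt : ∀ z : ℂ, ∑ i ∈ t, (c i).eval z * Complex.exp ((g i).eval z) = 0 := by
      intro z
      have h0 := hz z
      rw [Finset.sum_insert ha, hca] at h0
      simpa using h0
    have hct := ih c g (fun i hi j hj hij =>
      hg i (Finset.mem_insert_of_mem hi) j (Finset.mem_insert_of_mem hj) hij) hzt
    intro i hi
    rcases Finset.mem_insert.mp hi with rfl | hi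
    · exact hca
    · exact hct i hi


/-- Let `f 1, …, f m ∈ ℂ[z]`. No nontrivial integer combination
`a 1 • f 1 + ⋯ + a m • f m` is constant if and only if the entire functions
`e^{f 1}, …, e^{f m}` are algebraically independent over `ℂ(z)`: for every
nonzero polynomial `P` in `m` variables with coefficients in `ℂ[z]`, the
function `z ↦ P(z; exp (f 1 (z)), …, exp (f m (z)))` is not identically
zero. -/
theorem exp_poly_algebraically_independent (m : ℕ) (f : Fin m → Polynomial ℂ) :
    (∀ a : Fin m → ℤ, a ≠ 0 → ∀ c : ℂ,
        ∑ i, Polynomial.C (a i : ℂ) * f i ≠ Polynomial.C c) ↔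
      (∀ P : MvPolynomial (Fin m) (Polynomial ℂ), P ≠ 0 →
        ∃ z : ℂ, MvPolynomial.eval₂ (Polynomial.evalRingHom z)
          (fun i => Complex.exp ((f i).eval z)) P ≠ 0) := by
  constructor
  · intro h P hP
    by_contra hev
    push_neg at hev
    set g : (Fin m →₀ ℕ) → Polynomial ℂ := fun d => ∑ i, Polynomial.C ((d i : ℕ) : ℂ) * f i
      with hg
    have hrel : ∀ z : ℂ, ∑ d ∈ P.support, (P.coeff d).eval z * Complex.exp ((g d).eval z) = 0 := by
      intro z
      have h1 := hev z
      rw [MvPolynomial.eval₂_eq'] at h1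
      rw [← h1]
      refine Finset.sum_congr rfl fun d _ => ?_
      congr 1
      have h2 : ∀ i : Fin m, Complex.exp ((f i).eval z) ^ (d i)
          = Complex.exp (((d i : ℕ) : ℂ) * (f i).eval z) :=
        fun i => (Complex.exp_nat_mul _ _).symm
      rw [Finset.prod_congr rfl fun i _ => h2 i, ← Complex.exp_sum]
      congr 1
      simp [hg, Polynomial.eval_finset_sum]
    have hpair : ∀ d ∈ P.support, ∀ e ∈ P.support, d ≠ e → 0 < (g d - g e).natDegree := by
      intro d _ e _ hde
      by_contra h0
      push_neg at h0
      have h0' : (g d - g e).natDegree = 0 := Nat.le_zero.mp h0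
      set a : Fin m → ℤ := fun i => (d i : ℤ) - (e i : ℤ) with hadef
      have ha : a ≠ 0 := by
        intro h0a
        apply hde
        ext i
        have := congrFun h0a i
        simp [hadef] at this
        omega
      have heq : ∑ i, Polynomial.C ((a i : ℂ)) * f i = g d - g e := by
        rw [hg, ← Finset.sum_sub_distrib]
        refine Finset.sum_congr rfl fun i _ => ?_
        rw [← sub_mul, ← Polynomial.C_sub]
        congr 2
        simp [hadef]
      exact h a ha ((g d - g e).coeff 0)
        (heq.trans (Polynomial.eq_C_of_natDegree_eq_zero h0'))
    have hcz := exp_indep P.support (fun d => P.coeff d) g hpair hrel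
    obtain ⟨d, hd⟩ := MvPolynomial.support_nonempty.mpr hP
    exact MvPolynomial.mem_support_iff.mp hd (hcz d hd)
  · intro h a ha c hc
    set d₁ : Fin m →₀ ℕ := Finsupp.equivFunOnFinite.symm (fun i => (a i).toNat) with hd1
    set d₂ : Fin m →₀ ℕ := Finsupp.equivFunOnFinite.symm (fun i => (-a i).toNat) with hd2
    have hd1a : ∀ i, d₁ i = (a i).toNat := fun i => rfl
    have hd2a : ∀ i, d₂ i = (-a i).toNat := fun i => rfl
    have hne : d₁ ≠ d₂ := by
      obtain ⟨i, hi⟩ := Function.ne_iff.mp ha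
      intro hdd
      have := congrArg (fun v => v i) (congrArg Finsupp.equivFunOnFinite hdd)
      simp only [hd1, hd2, Equiv.apply_symm_apply] at this
      simp only [Pi.zero_apply] at hi
      omega
    set P : MvPolynomial (Fin m) (Polynomial ℂ) :=
      MvPolynomial.monomial d₁ (1 : Polynomial ℂ) -
        MvPolynomial.monomial d₂ (Polynomial.C (Complex.exp c)) with hPdef
    have hP : P ≠ 0 := by
      intro h0
      have := congrArg (MvPolynomial.coeff d₁) h0
      rw [hPdef] at this
      simp [MvPolynomial.coeff_sub, MvPolynomial.coeff_monomial, hne.symm] at this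
    obtain ⟨z, hz⟩ := h P hP
    apply hz
    rw [hPdef, MvPolynomial.eval₂_sub, MvPolynomial.eval₂_monomial, MvPolynomial.eval₂_monomial]
    have hprod : ∀ (dd : Fin m →₀ ℕ),
        (dd.prod fun i e => Complex.exp ((f i).eval z) ^ e)
          = Complex.exp (∑ i, ((dd i : ℕ) : ℂ) * (f i).eval z) := by
      intro dd
      rw [Finsupp.prod_fintype]
      · simp_rw [← Complex.exp_nat_mul]
        exact (Complex.exp_sum _ _).symm
      · intro i; simp
    rw [hprod, hprod]
    simp only [map_one, Polynomial.coe_evalRingHom, Polynomial.eval_C]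
    have hsum : ∑ i, ((d₁ i : ℕ) : ℂ) * (f i).eval z
        = c + ∑ i, ((d₂ i : ℕ) : ℂ) * (f i).eval z := by
      have hcz : ∑ i, (a i : ℂ) * (f i).eval z = c := by
        have := congrArg (Polynomial.eval z) hc
        simpa [Polynomial.eval_finset_sum] using this
      rw [← hcz, ← Finset.sum_add_distrib]
      refine Finset.sum_congr rfl fun i _ => ?_
      rw [hd1a, hd2a, ← add_mul]
      congr 1
      have hzz : (((a i).toNat : ℤ) : ℂ) = ((a i + ((-a i).toNat : ℤ) : ℤ) : ℂ) := by
        congr 1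
        omega
      push_cast at hzz
      exact hzz
    rw [hsum, Complex.exp_add]
    ring
end

section
/- For every integer m ≥ 1, the entire functions z, e^z, e^{z²}, …, e^{z^m} are algebraically independent over ℂ: for every nonzero polynomial P ∈ ℂ[X_0, X_1, …, X_m] in m+1 variables with complex coefficients, the function z ↦ P(z, exp(z), exp(z²), …, exp(z^m)) is not identically zero on ℂ. -/
open Polynomial
set_option maxHeartbeats 1000000
noncomputable def Dop (ψ Q : ℂ[X]) : ℂ[X] := derivative Q + derivative ψ * Q

lemma hasDerivAt_polyExp (Q ψ : ℂ[X]) (z : ℂ) :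
    HasDerivAt (fun w => Q.eval w * Complex.exp (ψ.eval w))
      ((Dop ψ Q).eval z * Complex.exp (ψ.eval z)) z := by
  have h1 : HasDerivAt (fun w => Q.eval w) (Q.derivative.eval z) z := Q.hasDerivAt z
  have h2 : HasDerivAt (fun w => Complex.exp (ψ.eval w))
      (Complex.exp (ψ.eval z) * ψ.derivative.eval z) z :=
    (Complex.hasDerivAt_exp _).comp z (ψ.hasDerivAt z)
  have := h1.fun_mul h2
  refine this.congr_deriv ?_
  simp [Dop]
  ring
lemma Dop_ne_zero {ψ Q : ℂ[X]} (hψ : derivative ψ ≠ 0) (hQ : Q ≠ 0) : Dop ψ Q ≠ 0 := by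
  have hq : derivative ψ * Q ≠ 0 := mul_ne_zero hψ hQ
  by_cases hp : derivative Q = 0
  · simpa [Dop, hp] using hq
  · have hd : Q.natDegree ≠ 0 := by
      intro h
      obtain ⟨a, rfl⟩ := Polynomial.natDegree_eq_zero.mp h
      simp at hp
    have h1 : (derivative Q).natDegree < Q.natDegree :=
      Polynomial.natDegree_derivative_lt hd
    have h2 : Q.natDegree ≤ (derivative ψ * Q).natDegree := by
      rw [Polynomial.natDegree_mul hψ hQ]; omega
    intro h
    have : derivative Q = -(derivative ψ * Q) := by
      rw [Dop] at h; exact eq_neg_of_add_eq_zero_left h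
    rw [this] at h1
    simp [Polynomial.natDegree_neg] at h1
    omega

lemma Dop_iter_ne_zero {ψ Q : ℂ[X]} (hψ : derivative ψ ≠ 0) (hQ : Q ≠ 0) (n : ℕ) :
    (Dop ψ)^[n] Q ≠ 0 := by
  induction n with
  | zero => simpa
  | succ n ih => rw [Function.iterate_succ_apply']; exact Dop_ne_zero hψ ih

lemma derivative_ne_zero_of_coeff_zero {ψ : ℂ[X]} (h0 : ψ.coeff 0 = 0) (hne : ψ ≠ 0) :
    derivative ψ ≠ 0 := by
  have hd : ψ.natDegree ≠ 0 := by
    intro h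
    obtain ⟨a, rfl⟩ := Polynomial.natDegree_eq_zero.mp h
    simp at h0; simp [h0] at hne
  intro h
  have := Polynomial.natDegree_derivative_lt hd
  rw [h] at this
  have h2 : ψ.natDegree - 1 < ψ.natDegree := by omega
  -- derivative = 0 means coeff (n+1)*(n+1)=0 for all n
  have hc : ψ.coeff ψ.natDegree = 0 := by
    have := Polynomial.coeff_derivative ψ (ψ.natDegree - 1)
    rw [h] at this
    simp at this
    rcases this with h' | h'
    · rwa [show ψ.natDegree - 1 + 1 = ψ.natDegree by omega] at h'
    · exfalso; exact (Nat.cast_add_one_ne_zero _ : ((ψ.natDegree - 1 : ℕ):ℂ) + 1 ≠ 0) (by exact_mod_cast h')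
  exact (Polynomial.leadingCoeff_ne_zero.mpr hne) hc

lemma key_s19 (n : ℕ) : ∀ (S : Finset ℂ[X]) (Q : ℂ[X] → ℂ[X]), S.card ≤ n →
    (∀ ψ ∈ S, ψ.coeff 0 = 0) → (∀ ψ ∈ S, Q ψ ≠ 0) →
    (∀ z : ℂ, ∑ ψ ∈ S, (Q ψ).eval z * Complex.exp (ψ.eval z) = 0) → S = ∅ := by
  induction n with
  | zero =>
    intro S Q hc _ _ _
    exact Finset.card_eq_zero.mp (Nat.le_zero.mp hc)
  | succ n ih =>
    intro S Q hc h0 hQ heq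
    rcases S.eq_empty_or_nonempty with rfl | ⟨φ₁, hφ₁⟩
    · rfl
    exfalso
    set N := (Q φ₁).natDegree + 1 with hN
    set f : ℕ → ℂ → ℂ := fun k z =>
      ∑ ψ ∈ S, ((Dop (ψ - φ₁))^[k] (Q ψ)).eval z * Complex.exp ((ψ - φ₁).eval z) with hf
    have hf0 : ∀ z, f 0 z = 0 := by
      intro z
      have : f 0 z = (∑ ψ ∈ S, (Q ψ).eval z * Complex.exp (ψ.eval z)) *
          (Complex.exp (φ₁.eval z))⁻¹ := by
        rw [Finset.sum_mul]
        refine Finset.sum_congr rfl fun ψ _ => ?_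
        simp [Complex.exp_sub, div_eq_mul_inv, mul_assoc]
      rw [this, heq, zero_mul]
    have hder : ∀ k z, HasDerivAt (f k) (f (k+1) z) z := by
      intro k z
      have : HasDerivAt (fun w => ∑ ψ ∈ S,
          ((Dop (ψ - φ₁))^[k] (Q ψ)).eval w * Complex.exp ((ψ - φ₁).eval w))
          (∑ ψ ∈ S, (Dop (ψ - φ₁) ((Dop (ψ - φ₁))^[k] (Q ψ))).eval z *
            Complex.exp ((ψ - φ₁).eval z)) z :=
        HasDerivAt.fun_sum fun ψ _ => hasDerivAt_polyExp _ _ z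
      convert this using 2 with ψ
      rw [Function.iterate_succ_apply']
    have hfz : ∀ k z, f k z = 0 := by
      intro k
      induction k with
      | zero => exact hf0
      | succ k ihk =>
        intro z
        have h1 := hder k z
        rw [show f k = fun _ => (0:ℂ) from funext ihk] at h1
        exact h1.unique (hasDerivAt_const z 0)
    -- the φ₁ term of f N is zero
    have hterm : ((Dop (φ₁ - φ₁))^[N] (Q φ₁)) = 0 := by
      rw [sub_self]
      have hD : Dop (0:ℂ[X]) = fun R => derivative R := by
        funext R; simp [Dop]
      rw [hD]
      exact Polynomial.iterate_derivative_eq_zero (by omega)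
    have hsum : ∀ z : ℂ, ∑ ψ ∈ S.erase φ₁,
        ((Dop (ψ - φ₁))^[N] (Q ψ)).eval z * Complex.exp ((ψ - φ₁).eval z) = 0 := by
      intro z
      have h2 : ∑ ψ ∈ S, Polynomial.eval z ((Dop (ψ - φ₁))^[N] (Q ψ)) *
          Complex.exp (Polynomial.eval z (ψ - φ₁)) = 0 := hfz N z
      rw [← Finset.add_sum_erase S _ hφ₁, hterm] at h2
      simpa using h2
    -- reindex
    set T : Finset ℂ[X] := (S.erase φ₁).image (· - φ₁) with hT
    have hinj : Set.InjOn (· - φ₁) (S.erase φ₁) := fun a _ b _ h => by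
      simpa using congrArg (· + φ₁) h
    set c : ℂ[X] → ℂ[X] := fun ψ => (Dop ψ)^[N] (Q (ψ + φ₁)) with hcdef
    have hTsum : ∀ z : ℂ, ∑ ψ ∈ T, (c ψ).eval z * Complex.exp (ψ.eval z) = 0 := by
      intro z
      rw [hT, Finset.sum_image hinj]
      rw [← hsum z]
      refine Finset.sum_congr rfl fun ψ hψ => ?_
      simp [hcdef]
    have hTempty : T = ∅ := by
      apply ih T c
      · have : T.card = (S.erase φ₁).card := Finset.card_image_of_injOn hinj
        rw [this, Finset.card_erase_of_mem hφ₁]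
        omega
      · intro ψ hψ
        rw [hT] at hψ
        obtain ⟨φ, hφ, rfl⟩ := Finset.mem_image.mp hψ
        have := h0 φ (Finset.mem_of_mem_erase hφ)
        have h2 := h0 φ₁ hφ₁
        simp [this, h2]
      · intro ψ hψ
        rw [hT] at hψ
        obtain ⟨φ, hφ, rfl⟩ := Finset.mem_image.mp hψ
        have hne : φ - φ₁ ≠ 0 := sub_ne_zero.mpr (Finset.ne_of_mem_erase hφ)
        have hc0 : (φ - φ₁).coeff 0 = 0 := by
          have := h0 φ (Finset.mem_of_mem_erase hφ)
          have h2 := h0 φ₁ hφ₁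
          simp [this, h2]
        have hder := derivative_ne_zero_of_coeff_zero hc0 hne
        refine Dop_iter_ne_zero hder ?_ N
        rw [sub_add_cancel]
        exact hQ φ (Finset.mem_of_mem_erase hφ)
      · exact hTsum
    have hSerase : S.erase φ₁ = ∅ := by
      rw [hT] at hTempty
      exact Finset.image_eq_empty.mp hTempty
    have hS1 : S = {φ₁} := by
      apply Finset.eq_singleton_iff_unique_mem.mpr
      refine ⟨hφ₁, fun x hx => ?_⟩
      by_contra hne
      have : x ∈ S.erase φ₁ := Finset.mem_erase.mpr ⟨hne, hx⟩
      rw [hSerase] at this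
      simp at this
    have hQ1 : Q φ₁ = 0 := by
      apply Polynomial.funext
      intro z
      have := heq z
      rw [hS1, Finset.sum_singleton] at this
      have hexp : Complex.exp (φ₁.eval z) ≠ 0 := Complex.exp_ne_zero _
      simpa [hexp] using this
    exact hQ φ₁ hφ₁ hQ1

noncomputable def expArg (m : ℕ) (d : Fin (m + 1) →₀ ℕ) : ℂ[X] :=
  ∑ i : Fin m, C ((d i.succ : ℕ) : ℂ) * X ^ ((i : ℕ) + 1)

lemma expArg_coeff_zero (m : ℕ) (d : Fin (m + 1) →₀ ℕ) : (expArg m d).coeff 0 = 0 := by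
  rw [expArg, Polynomial.finset_sum_coeff]
  refine Finset.sum_eq_zero fun i _ => ?_
  simp [Polynomial.coeff_C_mul, Polynomial.coeff_X_pow]

lemma expArg_coeff_succ (m : ℕ) (d : Fin (m + 1) →₀ ℕ) (k : Fin m) :
    (expArg m d).coeff ((k : ℕ) + 1) = ((d k.succ : ℕ) : ℂ) := by
  rw [expArg, Polynomial.finset_sum_coeff]
  rw [Finset.sum_eq_single k]
  · simp [Polynomial.coeff_C_mul, Polynomial.coeff_X_pow]
  · intro i _ hik
    have : (i : ℕ) + 1 ≠ (k : ℕ) + 1 := by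
      simp only [ne_eq, Nat.add_right_cancel_iff]
      exact fun h => hik (Fin.ext h)
    simp only [Polynomial.coeff_C_mul, Polynomial.coeff_X_pow]
    rw [if_neg (by omega : ¬((k:ℕ)+1 = (i:ℕ)+1)), mul_zero]
  · intro h; simp at h

lemma expArg_inj (m : ℕ) {d d' : Fin (m + 1) →₀ ℕ} (h : expArg m d = expArg m d')
    (h0 : d 0 = d' 0) : d = d' := by
  ext j
  induction j using Fin.cases with
  | zero => exact h0
  | succ k =>
    have := congrArg (fun p => Polynomial.coeff p ((k : ℕ) + 1)) h
    simp only [expArg_coeff_succ] at this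
    exact_mod_cast this

lemma expArg_eval (m : ℕ) (d : Fin (m + 1) →₀ ℕ) (z : ℂ) :
    (expArg m d).eval z = ∑ i : Fin m, ((d i.succ : ℕ) : ℂ) * z ^ ((i : ℕ) + 1) := by
  simp [expArg, Polynomial.eval_finset_sum]

lemma prod_pow_eq (m : ℕ) (d : Fin (m + 1) →₀ ℕ) (z : ℂ) :
    (∏ i : Fin (m + 1),
      (if (i : ℕ) = 0 then z else Complex.exp (z ^ (i : ℕ))) ^ d i)
    = z ^ (d 0) * Complex.exp ((expArg m d).eval z) := by
  rw [Fin.prod_univ_succ, expArg_eval, Complex.exp_sum]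
  have h1 : ∀ i : Fin m, ((if ((i.succ : Fin (m+1)) : ℕ) = 0 then z
      else Complex.exp (z ^ ((i.succ : Fin (m+1)) : ℕ))) ^ d i.succ)
      = Complex.exp (((d i.succ : ℕ) : ℂ) * z ^ ((i : ℕ) + 1)) := by
    intro i
    simp only [Fin.val_succ, Nat.add_eq_zero, one_ne_zero, and_false, if_false]
    rw [← Complex.exp_nat_mul]
  rw [Finset.prod_congr rfl fun i _ => h1 i]
  simp

/-- The entire functions `z, e^z, e^{z²}, …, e^{z^m}` are algebraically
independent over `ℂ`: for every nonzero polynomial `P` in `m + 1` complex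
variables, the function `z ↦ P(z, exp z, exp (z²), …, exp (z^m))` is not
identically zero. -/
theorem z_exp_powers_algebraically_independent (m : ℕ) (hm : 1 ≤ m)
    (P : MvPolynomial (Fin (m + 1)) ℂ) (hP : P ≠ 0) :
    ∃ z : ℂ, MvPolynomial.eval
      (fun i : Fin (m + 1) => if (i : ℕ) = 0 then z else Complex.exp (z ^ (i : ℕ)))
      P ≠ 0 := by
  by_contra hcon
  push_neg at hcon
  set S : Finset ℂ[X] := P.support.image (expArg m) with hS
  set Q : ℂ[X] → ℂ[X] := fun ψ =>
    ∑ d ∈ P.support.filter (fun d => expArg m d = ψ),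
      C (MvPolynomial.coeff d P) * X ^ (d 0) with hQdef
  have h0 : ∀ ψ ∈ S, ψ.coeff 0 = 0 := by
    intro ψ hψ
    obtain ⟨d, _, rfl⟩ := Finset.mem_image.mp hψ
    exact expArg_coeff_zero m d
  have hQne : ∀ ψ ∈ S, Q ψ ≠ 0 := by
    intro ψ hψ
    obtain ⟨d₀, hd₀, rfl⟩ := Finset.mem_image.mp hψ
    intro hzero
    have hc : (Q (expArg m d₀)).coeff (d₀ 0) = MvPolynomial.coeff d₀ P := by
      rw [hQdef]
      simp only
      rw [Polynomial.finset_sum_coeff]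
      have hmem : d₀ ∈ Finset.filter (fun d => expArg m d = expArg m d₀) P.support :=
        Finset.mem_filter.mpr ⟨hd₀, rfl⟩
      rw [Finset.sum_eq_single_of_mem d₀ hmem]
      · simp [Polynomial.coeff_C_mul, Polynomial.coeff_X_pow]
      · intro d hd hne
        obtain ⟨hdsup, hdeq⟩ := Finset.mem_filter.mp hd
        rw [Polynomial.coeff_C_mul, Polynomial.coeff_X_pow, if_neg, mul_zero]
        intro h
        exact hne (expArg_inj m hdeq h.symm)
    rw [hzero] at hc
    simp only [Polynomial.coeff_zero] at hc
    exact (MvPolynomial.mem_support_iff.mp hd₀) hc.symm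
  have hsum : ∀ z : ℂ, ∑ ψ ∈ S, (Q ψ).eval z * Complex.exp (ψ.eval z) = 0 := by
    intro z
    have hstep : ∑ ψ ∈ S, (Q ψ).eval z * Complex.exp (ψ.eval z)
        = ∑ ψ ∈ S, ∑ d ∈ P.support.filter (fun d => expArg m d = ψ),
            MvPolynomial.coeff d P * z ^ (d 0) *
              Complex.exp ((expArg m d).eval z) := by
      refine Finset.sum_congr rfl fun ψ hψ => ?_
      rw [hQdef]
      simp only
      rw [Polynomial.eval_finset_sum, Finset.sum_mul]
      refine Finset.sum_congr rfl fun d hd => ?_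
      obtain ⟨_, hdeq⟩ := Finset.mem_filter.mp hd
      rw [hdeq]
      simp
    rw [hstep]
    rw [Finset.sum_fiberwise_of_maps_to (fun d hd => Finset.mem_image_of_mem _ hd)]
    have : ∑ d ∈ P.support, MvPolynomial.coeff d P * z ^ (d 0) *
        Complex.exp ((expArg m d).eval z)
        = ∑ d ∈ P.support, MvPolynomial.coeff d P *
            ∏ i : Fin (m + 1),
              (if (i : ℕ) = 0 then z else Complex.exp (z ^ (i : ℕ))) ^ d i := by
      refine Finset.sum_congr rfl fun d _ => ?_
      rw [prod_pow_eq, mul_assoc]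
    rw [this, ← MvPolynomial.eval_eq']
    exact hcon z
  have hempty : S = ∅ := key_s19 S.card S Q le_rfl h0 hQne hsum
  have : P.support = ∅ := Finset.image_eq_empty.mp (hS ▸ hempty)
  exact hP (MvPolynomial.support_eq_empty.mp this)
end
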